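/- arXiv:2201.12869 — 3 statements merged into one kernel-verified Lean document; each statement's English description precedes it below -/
import Mathlib

section
/- The auxiliary graph of a multi-demand market has no negative-weight cycle. Concretely: let O^1,…,O^K enumerate all optimal allocations and a^i_x = |{t : x ∈ O^t_i}|/K. There do not exist distinct items x_0, x_1, …, x_l and players i_0, …, i_l with a^{i_j}_{x_j} > 0 and a^{i_j}_{x_{j+1}} < 1 for all j = 0,…,l (with x_{l+1} := x_0) such that Σ_{j=0}^{l} (v_{i_j}(x_j) − v_{i_j}(x_{j+1})) < 0. -/
open Finset

/-- The value of a bundle `S` for a player with demand `k` and item valuations `v`: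
the maximum, over subsets `T ⊆ S` with `|T| ≤ k`, of the total value of `T`. -/
noncomputable def bundleValue {X : Type*} [DecidableEq X] (k : ℕ) (v : X → ℝ)
    (S : Finset X) : ℝ :=
  ((S.powerset.filter (fun T => T.card ≤ k)).image (fun T => ∑ x ∈ T, v x)).max'
    (Finset.Nonempty.image ⟨∅, by simp⟩ _)

/-- An allocation: a partition of the items where player `i` gets exactly `k i` items. -/
def IsAllocation {X I : Type*} (k : I → ℕ) (O : I → Finset X) : Prop :=
  (∀ i, (O i).card = k i) ∧ (∀ x : X, ∃! i, x ∈ O i)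

/-- Social welfare of an allocation. -/
noncomputable def socialWelfare {X I : Type*} [DecidableEq X] [Fintype I]
    (v : I → X → ℝ) (k : I → ℕ) (O : I → Finset X) : ℝ :=
  ∑ i, bundleValue (k i) (v i) (O i)

/-- An optimal allocation: an allocation maximizing social welfare. -/
def IsOptimal {X I : Type*} [DecidableEq X] [Fintype I]
    (v : I → X → ℝ) (k : I → ℕ) (O : I → Finset X) : Prop :=
  IsAllocation k O ∧
    ∀ O' : I → Finset X, IsAllocation k O' → socialWelfare v k O' ≤ socialWelfare v k O


lemma bundleValue_eq_sum {X : Type*} [DecidableEq X] (k : ℕ) (v : X → ℝ)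
    (hv : ∀ x, 0 ≤ v x) (S : Finset X) (hS : S.card ≤ k) :
    bundleValue k v S = ∑ x ∈ S, v x := by
  apply le_antisymm
  · apply Finset.max'_le
    intro y hy
    simp only [Finset.mem_image, Finset.mem_filter, Finset.mem_powerset] at hy
    obtain ⟨T, ⟨hT, _⟩, rfl⟩ := hy
    exact Finset.sum_le_sum_of_subset_of_nonneg hT (fun x _ _ => hv x)
  · apply Finset.le_max'
    exact Finset.mem_image_of_mem _ (by simp [hS])

lemma socialWelfare_eq_sum {X I : Type*} [DecidableEq X] [Fintype I]
    (v : I → X → ℝ) (hv : ∀ i x, 0 ≤ v i x) (k : I → ℕ) (O : I → Finset X)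
    (hO : IsAllocation k O) :
    socialWelfare v k O = ∑ i, ∑ x ∈ O i, v i x := by
  unfold socialWelfare
  exact Finset.sum_congr rfl fun i _ =>
    bundleValue_eq_sum _ _ (hv i) _ (le_of_eq (hO.1 i))

/-- Hall-type extraction of an allocation from a nonnegative integer matrix with
column sums `K` and row sums `K * k i`. -/
lemma extract_allocation {X I : Type*} [Fintype X] [DecidableEq X] [Fintype I] [DecidableEq I]
    (k : I → ℕ) (hsum : ∑ i, k i = Fintype.card X)
    (K : ℕ) (hK : 0 < K) (c : I → X → ℕ)
    (hcol : ∀ x, ∑ i, c i x = K) (hrow : ∀ i, ∑ x, c i x = K * k i) :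
    ∃ O : I → Finset X, IsAllocation k O ∧ ∀ i x, x ∈ O i → 1 ≤ c i x := by
  classical
  set t : X → Finset ((i : I) × Fin (k i)) :=
    fun x => Finset.univ.filter (fun p => 1 ≤ c p.1 x) with ht
  have hall : ∀ s : Finset X, s.card ≤ (s.biUnion t).card := by
    intro s
    have hbU : s.biUnion t =
        (Finset.univ.filter (fun i : I => ∃ x ∈ s, 1 ≤ c i x)).sigma
          (fun i => (Finset.univ : Finset (Fin (k i)))) := by
      ext ⟨i, m⟩
      simp [ht, Finset.mem_sigma, Finset.mem_biUnion]
    rw [hbU, Finset.card_sigma]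
    simp only [Finset.card_univ, Fintype.card_fin]
    set N := Finset.univ.filter (fun i : I => ∃ x ∈ s, 1 ≤ c i x) with hN
    have key : K * s.card ≤ K * ∑ i ∈ N, k i := by
      calc K * s.card = ∑ x ∈ s, K := by rw [Finset.sum_const, smul_eq_mul, mul_comm]
        _ = ∑ x ∈ s, ∑ i, c i x := by exact Finset.sum_congr rfl fun x _ => (hcol x).symm
        _ = ∑ x ∈ s, ∑ i ∈ N, c i x := by
            refine Finset.sum_congr rfl fun x hx => ?_
            refine (Finset.sum_subset (Finset.subset_univ _) ?_).symm
            intro i _ hiN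
            simp only [hN, Finset.mem_filter, Finset.mem_univ, true_and] at hiN
            push_neg at hiN
            have := hiN x hx
            omega
        _ = ∑ i ∈ N, ∑ x ∈ s, c i x := Finset.sum_comm
        _ ≤ ∑ i ∈ N, ∑ x, c i x :=
            Finset.sum_le_sum fun i _ =>
              Finset.sum_le_sum_of_subset (Finset.subset_univ _)
        _ = ∑ i ∈ N, K * k i := Finset.sum_congr rfl fun i _ => hrow i
        _ = K * ∑ i ∈ N, k i := (Finset.mul_sum _ _ _).symm
    exact Nat.le_of_mul_le_mul_left key hK
  obtain ⟨f, hfinj, hft⟩ := (Finset.all_card_le_biUnion_card_iff_exists_injective t).mp hall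
  refine ⟨fun i => Finset.univ.filter (fun x => (f x).1 = i), ⟨?_, ?_⟩, ?_⟩
  · -- cards
    have hle : ∀ i, (Finset.univ.filter (fun x => (f x).1 = i)).card ≤ k i := by
      intro i
      have h := Finset.card_le_card_of_injOn (fun x => ((f x).2 : ℕ))
        (s := Finset.univ.filter (fun x => (f x).1 = i)) (t := Finset.range (k i))
        (fun x hx => by
          simp only [Finset.coe_filter, Set.mem_setOf_eq, Finset.mem_univ, true_and] at hx
          exact Finset.mem_range.2 (hx ▸ (f x).2.isLt))
        (fun x hx y hy hxy => by
          simp only [Finset.coe_filter, Set.mem_setOf_eq, Finset.mem_univ, true_and] at hx hy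
          refine hfinj (Sigma.ext (by rw [hx, hy]) ?_)
          exact (Fin.heq_ext_iff (by rw [hx, hy])).mpr hxy)
      simpa using h
    have hpart : ∑ i, (Finset.univ.filter (fun x => (f x).1 = i)).card = Fintype.card X := by
      rw [← Finset.card_univ]
      exact (Finset.card_eq_sum_card_fiberwise
        (f := fun x => (f x).1) (fun x _ => Finset.mem_univ _)).symm
    exact fun i => (Finset.sum_eq_sum_iff_of_le (fun i _ => hle i)).mp
      (hpart.trans hsum.symm) i (Finset.mem_univ i)
  · intro x
    refine ⟨(f x).1, by simp, fun i hi => ?_⟩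
    simp only [Finset.mem_filter] at hi
    exact hi.2.symm
  · intro i x hx
    simp only [Finset.mem_filter, Finset.mem_univ, true_and] at hx
    have := hft x
    simp only [ht, Finset.mem_filter, Finset.mem_univ, true_and] at this
    rwa [hx] at this

/-- The welfare of any nonnegative integer "fractional allocation" matrix with column
sums `K` and row sums `K * k i` is at most `K` times the max allocation welfare. -/
lemma matrix_welfare_le {X I : Type*} [Fintype X] [DecidableEq X] [Fintype I] [DecidableEq I]
    (k : I → ℕ) (hsum : ∑ i, k i = Fintype.card X)
    (v : I → X → ℝ) (W : ℝ)
    (hW : ∀ O : I → Finset X, IsAllocation k O → ∑ i, ∑ x ∈ O i, v i x ≤ W) :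
    ∀ K : ℕ, ∀ c : I → X → ℕ, (∀ x, ∑ i, c i x = K) → (∀ i, ∑ x, c i x = K * k i) →
      ∑ i, ∑ x, (c i x : ℝ) * v i x ≤ K * W := by
  intro K
  induction K with
  | zero =>
    intro c hcol hrow
    have hc : ∀ i x, c i x = 0 := by
      intro i x
      have := hcol x
      have h0 : c i x ≤ ∑ i, c i x := Finset.single_le_sum (f := fun i => c i x)
        (fun i _ => Nat.zero_le _) (Finset.mem_univ i)
      omega
    simp [hc]
  | succ K ih =>
    intro c hcol hrow
    obtain ⟨O, hO, hOc⟩ := extract_allocation k hsum (K + 1) (Nat.succ_pos K) c hcol hrow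
    set c' : I → X → ℕ := fun i x => c i x - (if x ∈ O i then 1 else 0) with hc'
    have hkey : ∀ i x, c i x = c' i x + (if x ∈ O i then 1 else 0) := by
      intro i x
      by_cases h : x ∈ O i
      · have := hOc i x h
        simp [hc', h]
        omega
      · simp [hc', h]
    have hcol' : ∀ x, ∑ i, c' i x = K := by
      intro x
      have h1 : ∑ i, c i x = ∑ i, c' i x + ∑ i, (if x ∈ O i then 1 else 0) := by
        rw [← Finset.sum_add_distrib]
        exact Finset.sum_congr rfl fun i _ => hkey i x
      have h2 : ∑ i, (if x ∈ O i then 1 else 0) = 1 := by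
        obtain ⟨i₀, hi₀, hu⟩ := hO.2 x
        rw [Finset.sum_eq_single i₀]
        · simp [hi₀]
        · intro i _ hne
          simp only [ite_eq_right_iff]
          intro hmem
          exact absurd (hu i hmem) hne
        · simp
      rw [hcol x] at h1
      omega
    have hrow' : ∀ i, ∑ x, c' i x = K * k i := by
      intro i
      have h1 : ∑ x, c i x = ∑ x, c' i x + ∑ x, (if x ∈ O i then 1 else 0) := by
        rw [← Finset.sum_add_distrib]
        exact Finset.sum_congr rfl fun x _ => hkey i x
      have h2 : ∑ x, (if x ∈ O i then 1 else 0) = k i := by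
        rw [Finset.sum_ite_mem, Finset.univ_inter, Finset.sum_const, smul_eq_mul, mul_one]
        exact hO.1 i
      rw [hrow i] at h1
      have : (K + 1) * k i = K * k i + k i := by ring
      omega
    have hsplit : ∑ i, ∑ x, (c i x : ℝ) * v i x =
        (∑ i, ∑ x, (c' i x : ℝ) * v i x) + ∑ i, ∑ x ∈ O i, v i x := by
      rw [← Finset.sum_add_distrib]
      refine Finset.sum_congr rfl fun i _ => ?_
      have : ∑ x ∈ O i, v i x = ∑ x, (if x ∈ O i then 1 else 0 : ℝ) * v i x := by
        simp [ite_mul, Finset.sum_ite_mem]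
      rw [this, ← Finset.sum_add_distrib]
      refine Finset.sum_congr rfl fun x _ => ?_
      rw [← add_mul]
      congr 1
      rw [hkey i x]
      push_cast
      split <;> simp
    rw [hsplit]
    have := ih c' hcol' hrow'
    have h2 := hW O hO
    push_cast
    linarith

lemma sum_ite_and_left {α : Type*} [Fintype α] [DecidableEq α] (b : α) (Q : Prop)
    [Decidable Q] (n : ℕ) :
    ∑ i : α, (if b = i ∧ Q then n else 0) = if Q then n else 0 := by
  simp [ite_and, Finset.sum_ite_eq]

lemma sum_ite_and_right {α : Type*} [Fintype α] [DecidableEq α] (b : α) (Q : Prop)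
    [Decidable Q] (n : ℕ) :
    ∑ i : α, (if Q ∧ b = i then n else 0) = if Q then n else 0 := by
  simp [ite_and, Finset.sum_ite_eq]

lemma double_ind_sum {α β : Type*} [Fintype α] [Fintype β] [DecidableEq α] [DecidableEq β]
    (b : α) (c : β) (f : α → β → ℝ) :
    ∑ i : α, ∑ x : β, (if b = i ∧ c = x then f i x else 0) = f b c := by
  simp [ite_and, Finset.sum_ite_eq]

/-- The auxiliary graph of a multi-demand market has no negative-weight cycle. -/
theorem no_negative_cycle_in_auxiliary_graph
    {X I : Type*} [Fintype X] [DecidableEq X] [Fintype I] [DecidableEq I]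
    (k : I → ℕ) (hk : ∀ i, 1 ≤ k i) (hsum : ∑ i, k i = Fintype.card X)
    (v : I → X → ℝ) (hv : ∀ i x, 0 ≤ v i x)
    (K : ℕ) (hK : 1 ≤ K)
    (Oenum : Fin K → I → Finset X)
    (hinj : Function.Injective Oenum)
    (hall : ∀ O : I → Finset X, IsOptimal v k O ↔ ∃ t, Oenum t = O)
    (a : I → X → ℝ)
    (ha : ∀ i x, a i x =
      ((Finset.univ.filter (fun t : Fin K => x ∈ Oenum t i)).card : ℝ) / K) :
    ¬ ∃ (l : ℕ) (xs : Fin (l + 1) → X) (ii : Fin (l + 1) → I),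
        Function.Injective xs ∧
        (∀ j, 0 < a (ii j) (xs j)) ∧
        (∀ j, a (ii j) (xs (j + 1)) < 1) ∧
        (∑ j, (v (ii j) (xs j) - v (ii j) (xs (j + 1)))) < 0 := by
  classical
  rintro ⟨l, xs, ii, hxs, hpos, _hlt1, hneg⟩
  -- the integer occurrence matrix
  set c : I → X → ℕ := fun i x => (Finset.univ.filter (fun t : Fin K => x ∈ Oenum t i)).card
    with hc
  have hcind : ∀ i x, c i x = ∑ t : Fin K, (if x ∈ Oenum t i then 1 else 0) := by
    intro i x
    simp only [hc]
    exact Finset.card_filter _ _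
  -- every enumerated allocation is optimal, hence an allocation
  have hopt : ∀ t, IsOptimal v k (Oenum t) := fun t => (hall (Oenum t)).mpr ⟨t, rfl⟩
  have halloc : ∀ t, IsAllocation k (Oenum t) := fun t => (hopt t).1
  set t0 : Fin K := ⟨0, hK⟩ with ht0
  set W : ℝ := socialWelfare v k (Oenum t0) with hW
  have hWopt : ∀ O : I → Finset X, IsAllocation k O → ∑ i, ∑ x ∈ O i, v i x ≤ W := by
    intro O hO
    rw [← socialWelfare_eq_sum v hv k O hO]
    exact (hopt t0).2 O hO
  have hWeq : ∀ t, socialWelfare v k (Oenum t) = W :=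
    fun t => le_antisymm ((hopt t0).2 _ (halloc t)) ((hopt t).2 _ (halloc t0))
  -- column and row sums of c
  have hcol : ∀ x, ∑ i, c i x = K := by
    intro x
    calc ∑ i, c i x = ∑ i, ∑ t : Fin K, (if x ∈ Oenum t i then 1 else 0) :=
          Finset.sum_congr rfl fun i _ => hcind i x
      _ = ∑ t : Fin K, ∑ i, (if x ∈ Oenum t i then 1 else 0) := Finset.sum_comm
      _ = ∑ t : Fin K, 1 := by
          refine Finset.sum_congr rfl fun t _ => ?_
          obtain ⟨i₀, hi₀, hu⟩ := (halloc t).2 x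
          rw [Finset.sum_eq_single i₀]
          · simp [hi₀]
          · intro i _ hne
            simp only [ite_eq_right_iff]
            intro hmem
            exact absurd (hu i hmem) hne
          · simp
      _ = K := by simp
  have hrow : ∀ i, ∑ x, c i x = K * k i := by
    intro i
    calc ∑ x, c i x = ∑ x, ∑ t : Fin K, (if x ∈ Oenum t i then 1 else 0) :=
          Finset.sum_congr rfl fun x _ => hcind i x
      _ = ∑ t : Fin K, ∑ x, (if x ∈ Oenum t i then 1 else 0) := Finset.sum_comm
      _ = ∑ t : Fin K, k i := by
          refine Finset.sum_congr rfl fun t _ => ?_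
          rw [Finset.sum_ite_mem, Finset.univ_inter, Finset.sum_const, smul_eq_mul, mul_one]
          exact (halloc t).1 i
      _ = K * k i := by simp [mul_comm]
  -- total value of c equals K * W
  have hval : ∑ i, ∑ x, (c i x : ℝ) * v i x = K * W := by
    calc ∑ i, ∑ x, (c i x : ℝ) * v i x
        = ∑ i, ∑ x, ∑ t : Fin K, (if x ∈ Oenum t i then v i x else 0) := by
          refine Finset.sum_congr rfl fun i _ => Finset.sum_congr rfl fun x _ => ?_
          rw [hcind i x]
          push_cast
          rw [Finset.sum_mul]
          exact Finset.sum_congr rfl fun t _ => by split <;> simp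
      _ = ∑ i, ∑ t : Fin K, ∑ x, (if x ∈ Oenum t i then v i x else 0) :=
          Finset.sum_congr rfl fun i _ => Finset.sum_comm
      _ = ∑ t : Fin K, ∑ i, ∑ x, (if x ∈ Oenum t i then v i x else 0) := Finset.sum_comm
      _ = ∑ t : Fin K, ∑ i, ∑ x ∈ Oenum t i, v i x := by
          refine Finset.sum_congr rfl fun t _ => Finset.sum_congr rfl fun i _ => ?_
          simp [Finset.sum_ite_mem]
      _ = ∑ t : Fin K, W := by
          refine Finset.sum_congr rfl fun t _ => ?_
          rw [← socialWelfare_eq_sum v hv k _ (halloc t)]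
          exact hWeq t
      _ = K * W := by simp
  -- perturbation along the cycle
  set D : I → X → ℕ := fun i x => ∑ j, (if ii j = i ∧ xs j = x then 1 else 0) with hD
  set A : I → X → ℕ := fun i x => ∑ j, (if ii j = i ∧ xs (j + 1) = x then 1 else 0) with hA
  have hDle1 : ∀ i x, D i x ≤ 1 := by
    intro i x
    have h1 : D i x = (Finset.univ.filter (fun j => ii j = i ∧ xs j = x)).card := by
      simp only [hD]
      exact (Finset.card_filter _ _).symm
    rw [h1]
    apply Finset.card_le_one.mpr
    intro j hj j' hj'
    simp only [Finset.mem_filter] at hj hj'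
    exact hxs (hj.2.2.trans hj'.2.2.symm)
  have hpos' : ∀ j, 1 ≤ c (ii j) (xs j) := by
    intro j
    have h := hpos j
    rw [ha] at h
    show 1 ≤ (Finset.univ.filter (fun t : Fin K => xs j ∈ Oenum t (ii j))).card
    by_contra hcon
    push_neg at hcon
    have h0 : (Finset.univ.filter (fun t : Fin K => xs j ∈ Oenum t (ii j))).card = 0 := by
      omega
    rw [h0] at h
    simp at h
  have hDc : ∀ i x, D i x ≤ c i x := by
    intro i x
    by_cases h : D i x = 0
    · omega
    · have h1 : ∃ j, ii j = i ∧ xs j = x := by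
        by_contra hcon
        push_neg at hcon
        have : D i x = 0 := by
          rw [hD]
          apply Finset.sum_eq_zero
          intro j _
          have := hcon j
          simp only [ite_eq_right_iff]
          intro ⟨e1, e2⟩
          exact absurd e2 (this e1)
        exact h this
      obtain ⟨j, hj1, hj2⟩ := h1
      have := hpos' j
      rw [hj1, hj2] at this
      have := hDle1 i x
      omega
  -- column sums of A and D agree
  have hADcol : ∀ x, ∑ i, A i x = ∑ i, D i x := by
    intro x
    have h1 : ∑ i, A i x = ∑ j, (if xs (j + 1) = x then 1 else 0) := by
      rw [hA, Finset.sum_comm]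
      exact Finset.sum_congr rfl fun j _ => sum_ite_and_left (ii j) _ 1
    have h2 : ∑ i, D i x = ∑ j, (if xs j = x then 1 else 0) := by
      rw [hD, Finset.sum_comm]
      exact Finset.sum_congr rfl fun j _ => sum_ite_and_left (ii j) _ 1
    rw [h1, h2]
    exact Fintype.sum_bijective (· + 1) (Equiv.addRight (1 : Fin (l + 1))).bijective _ _
      (fun j => rfl)
  -- row sums of A and D agree
  have hADrow : ∀ i, ∑ x, A i x = ∑ x, D i x := by
    intro i
    have h1 : ∑ x, A i x = ∑ j, (if ii j = i then 1 else 0) := by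
      rw [hA, Finset.sum_comm]
      exact Finset.sum_congr rfl fun j _ => sum_ite_and_right (xs (j + 1)) _ 1
    have h2 : ∑ x, D i x = ∑ j, (if ii j = i then 1 else 0) := by
      rw [hD, Finset.sum_comm]
      exact Finset.sum_congr rfl fun j _ => sum_ite_and_right (xs j) _ 1
    rw [h1, h2]
  -- values of A and D
  have hvalD : ∑ i, ∑ x, (D i x : ℝ) * v i x = ∑ j, v (ii j) (xs j) := by
    have : ∀ i x, (D i x : ℝ) * v i x =
        ∑ j, (if ii j = i ∧ xs j = x then v i x else 0) := by
      intro i x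
      simp only [hD]
      push_cast
      rw [Finset.sum_mul]
      exact Finset.sum_congr rfl fun j _ => by split <;> simp
    calc ∑ i, ∑ x, (D i x : ℝ) * v i x
        = ∑ j, ∑ i, ∑ x, (if ii j = i ∧ xs j = x then v i x else 0) := by
          simp_rw [this]
          rw [show (∑ i, ∑ x, ∑ j, (if ii j = i ∧ xs j = x then v i x else 0))
              = ∑ i, ∑ j, ∑ x, (if ii j = i ∧ xs j = x then v i x else 0) from
            Finset.sum_congr rfl fun i _ => Finset.sum_comm]
          exact Finset.sum_comm
      _ = ∑ j, v (ii j) (xs j) :=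
          Finset.sum_congr rfl fun j _ => double_ind_sum (ii j) (xs j) v
  have hvalA : ∑ i, ∑ x, (A i x : ℝ) * v i x = ∑ j, v (ii j) (xs (j + 1)) := by
    have : ∀ i x, (A i x : ℝ) * v i x =
        ∑ j, (if ii j = i ∧ xs (j + 1) = x then v i x else 0) := by
      intro i x
      simp only [hA]
      push_cast
      rw [Finset.sum_mul]
      exact Finset.sum_congr rfl fun j _ => by split <;> simp
    calc ∑ i, ∑ x, (A i x : ℝ) * v i x
        = ∑ j, ∑ i, ∑ x, (if ii j = i ∧ xs (j + 1) = x then v i x else 0) := by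
          simp_rw [this]
          rw [show (∑ i, ∑ x, ∑ j, (if ii j = i ∧ xs (j + 1) = x then v i x else 0))
              = ∑ i, ∑ j, ∑ x, (if ii j = i ∧ xs (j + 1) = x then v i x else 0) from
            Finset.sum_congr rfl fun i _ => Finset.sum_comm]
          exact Finset.sum_comm
      _ = ∑ j, v (ii j) (xs (j + 1)) :=
          Finset.sum_congr rfl fun j _ => double_ind_sum (ii j) (xs (j + 1)) v
  -- the perturbed matrix
  set c' : I → X → ℕ := fun i x => c i x + A i x - D i x with hc'
  have hkey : ∀ i x, c' i x + D i x = c i x + A i x := by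
    intro i x
    have := hDc i x
    simp only [hc']
    omega
  have hcol' : ∀ x, ∑ i, c' i x = K := by
    intro x
    have h1 : ∑ i, (c' i x + D i x) = ∑ i, (c i x + A i x) :=
      Finset.sum_congr rfl fun i _ => hkey i x
    rw [Finset.sum_add_distrib, Finset.sum_add_distrib] at h1
    have := hADcol x
    have := hcol x
    omega
  have hrow' : ∀ i, ∑ x, c' i x = K * k i := by
    intro i
    have h1 : ∑ x, (c' i x + D i x) = ∑ x, (c i x + A i x) :=
      Finset.sum_congr rfl fun x _ => hkey i x
    rw [Finset.sum_add_distrib, Finset.sum_add_distrib] at h1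
    have := hADrow i
    have := hrow i
    omega
  have hcast : ∀ i x, (c' i x : ℝ) = (c i x : ℝ) + (A i x : ℝ) - (D i x : ℝ) := by
    intro i x
    have := congrArg (fun n : ℕ => (n : ℝ)) (hkey i x)
    push_cast at this
    linarith
  have hval' : ∑ i, ∑ x, (c' i x : ℝ) * v i x =
      K * W + ∑ j, v (ii j) (xs (j + 1)) - ∑ j, v (ii j) (xs j) := by
    have : ∀ i x, (c' i x : ℝ) * v i x =
        (c i x : ℝ) * v i x + (A i x : ℝ) * v i x - (D i x : ℝ) * v i x := by
      intro i x
      rw [hcast]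
      ring
    simp_rw [this]
    simp only [Finset.sum_add_distrib, Finset.sum_sub_distrib]
    rw [hval, hvalA, hvalD]
  -- contradiction with optimality
  have hle := matrix_welfare_le k hsum v W hWopt K c' hcol' hrow'
  rw [Finset.sum_sub_distrib] at hneg
  rw [hval'] at hle
  linarith
end

section
/- Let O^1,…,O^K enumerate all optimal allocations of a multi-demand market and a^i_x = |{t : x ∈ O^t_i}|/K. Suppose a player î and items x, y satisfy a^{î}_x > 0 and a^{î}_y < 1 (so the auxiliary graph has an edge x → y induced by î). Then there exist l ≥ 1, items z_0 = x, z_1 = y, z_2, …, z_l (with z_{l+1} := z_0) and players j_0 = î, j_1, …, j_l such that a^{j_s}_{z_s} > 0 and a^{j_s}_{z_{s+1}} < 1 for all s = 0,…,l and Σ_{s=0}^{l} (v_{j_s}(z_s) − v_{j_s}(z_{s+1})) = 0, if and only if 0 < a^{î}_x < 1 and 0 < a^{î}_y < 1. -/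
open Finset

namespace MDM
set_option linter.unusedSectionVars false
set_option maxHeartbeats 1000000
variable {X I : Type*} [Fintype X] [DecidableEq X] [Fintype I] [DecidableEq I]

lemma bundleValue_eq_sum (k : ℕ) (v : X → ℝ) (hv : ∀ x, 0 ≤ v x) (S : Finset X)
    (hS : S.card ≤ k) : bundleValue k v S = ∑ x ∈ S, v x := by
  apply le_antisymm
  · apply Finset.max'_le
    intro w hw
    simp only [Finset.mem_image, Finset.mem_filter, Finset.mem_powerset] at hw
    obtain ⟨T, ⟨hT, _⟩, rfl⟩ := hw
    exact Finset.sum_le_sum_of_subset_of_nonneg hT (fun x _ _ => hv x)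
  · apply Finset.le_max'
    simp only [Finset.mem_image, Finset.mem_filter, Finset.mem_powerset]
    exact ⟨S, ⟨subset_rfl, hS⟩, rfl⟩

noncomputable def owner {k : I → ℕ} {O : I → Finset X} (h : IsAllocation k O) (w : X) : I :=
  (h.2 w).exists.choose

lemma mem_owner {k : I → ℕ} {O : I → Finset X} (h : IsAllocation k O) (w : X) :
    w ∈ O (owner h w) := (h.2 w).exists.choose_spec

lemma owner_eq {k : I → ℕ} {O : I → Finset X} (h : IsAllocation k O) {w : X} {i : I}
    (hw : w ∈ O i) : owner h w = i :=
  (h.2 w).unique (mem_owner h w) hw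

lemma owner_spec {k : I → ℕ} {O : I → Finset X} (h : IsAllocation k O) (w : X) (i : I) :
    w ∈ O i ↔ owner h w = i :=
  ⟨fun hw => owner_eq h hw, fun hw => hw ▸ mem_owner h w⟩

lemma socialWelfare_eq {v : I → X → ℝ} (hv : ∀ i x, 0 ≤ v i x) {k : I → ℕ}
    {O : I → Finset X} (h : IsAllocation k O) :
    socialWelfare v k O = ∑ i, ∑ w ∈ O i, v i w := by
  unfold socialWelfare
  exact Finset.sum_congr rfl fun i _ => bundleValue_eq_sum _ _ (hv i) _ (h.1 i).le

lemma socialWelfare_eq_owner {v : I → X → ℝ} (hv : ∀ i x, 0 ≤ v i x) {k : I → ℕ}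
    {O : I → Finset X} (h : IsAllocation k O) :
    socialWelfare v k O = ∑ w, v (owner h w) w := by
  rw [socialWelfare_eq hv h]
  have hO : ∀ i, O i = Finset.univ.filter (fun w => owner h w = i) := by
    intro i; ext w; simp [owner_spec h w i]
  rw [Finset.sum_congr rfl (fun i _ => by rw [hO i])]
  rw [← Finset.sum_fiberwise Finset.univ (fun w => owner h w) (fun w => v (owner h w) w)]
  apply Finset.sum_congr rfl
  intro i _
  apply Finset.sum_congr rfl
  intro w hw
  simp only [Finset.mem_filter] at hw
  rw [hw.2]

lemma a_pos_iff {K : ℕ} (hK : 1 ≤ K) (Oenum : Fin K → I → Finset X) (a : I → X → ℝ)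
    (ha : ∀ i x, a i x = ((Finset.univ.filter (fun t : Fin K => x ∈ Oenum t i)).card : ℝ) / K)
    (i : I) (w : X) : 0 < a i w ↔ ∃ t, w ∈ Oenum t i := by
  have hK' : (0:ℝ) < K := by exact_mod_cast hK
  rw [ha, div_pos_iff]
  constructor
  · rintro (⟨h1, _⟩ | ⟨_, h2⟩)
    · have : (Finset.univ.filter (fun t : Fin K => w ∈ Oenum t i)).Nonempty := by
        rw [← Finset.card_pos]; exact_mod_cast h1
      obtain ⟨t, ht⟩ := this
      exact ⟨t, (Finset.mem_filter.mp ht).2⟩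
    · linarith
  · rintro ⟨t, ht⟩
    left
    constructor
    · have : t ∈ Finset.univ.filter (fun t : Fin K => w ∈ Oenum t i) := by
        simp [ht]
      have := Finset.card_pos.mpr ⟨t, this⟩
      exact_mod_cast this
    · exact hK'

lemma a_lt_one_iff {K : ℕ} (hK : 1 ≤ K) (Oenum : Fin K → I → Finset X) (a : I → X → ℝ)
    (ha : ∀ i x, a i x = ((Finset.univ.filter (fun t : Fin K => x ∈ Oenum t i)).card : ℝ) / K)
    (i : I) (w : X) : a i w < 1 ↔ ∃ t, w ∉ Oenum t i := by
  have hK' : (0:ℝ) < K := by exact_mod_cast hK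
  rw [ha, div_lt_one hK']
  constructor
  · intro h
    by_contra hc
    push_neg at hc
    have : Finset.univ.filter (fun t : Fin K => w ∈ Oenum t i) = Finset.univ := by
      apply Finset.filter_true_of_mem; intro t _; exact hc t
    rw [this, Finset.card_univ, Fintype.card_fin] at h
    exact lt_irrefl _ h
  · rintro ⟨t, ht⟩
    have hss : Finset.univ.filter (fun t : Fin K => w ∈ Oenum t i) ⊂ Finset.univ := by
      refine Finset.ssubset_univ_iff.mpr ?_
      intro hc
      have : t ∈ Finset.univ.filter (fun t : Fin K => w ∈ Oenum t i) := by
        rw [hc]; exact Finset.mem_univ t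
      exact ht (Finset.mem_filter.mp this).2
    have := Finset.card_lt_card hss
    rw [Finset.card_univ, Fintype.card_fin] at this
    exact_mod_cast this

lemma exists_allocation_le {k : I → ℕ} (hsum : ∑ i, k i = Fintype.card X)
    (M : ℕ) (hM : 1 ≤ M) (b : I → X → ℕ)
    (hcol : ∀ w, ∑ i, b i w = M) (hrow : ∀ i, ∑ w, b i w = M * k i) :
    ∃ O : I → Finset X, IsAllocation k O ∧ ∀ i w, w ∈ O i → 0 < b i w := by
  set α := Σ i : I, Fin (k i) with hα
  set t : X → Finset α := fun w => Finset.univ.filter (fun p => 0 < b p.1 w) with htdef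
  have hall : ∀ s : Finset X, s.card ≤ (s.biUnion t).card := by
    intro s
    set J : Finset I := Finset.univ.filter (fun i => ∃ w ∈ s, 0 < b i w) with hJ
    have hbU : s.biUnion t = J.sigma (fun i => (Finset.univ : Finset (Fin (k i)))) := by
      ext ⟨p1, p2⟩
      rw [Finset.mem_sigma]
      simp only [Finset.mem_biUnion, Finset.mem_filter, Finset.mem_univ,
        true_and, and_true, htdef, hJ]
    have hcard : (s.biUnion t).card = ∑ i ∈ J, k i := by
      rw [hbU, Finset.card_sigma]
      simp
    rw [hcard]
    have key : M * s.card ≤ M * ∑ i ∈ J, k i := by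
      calc M * s.card = ∑ w ∈ s, M := by rw [Finset.sum_const, smul_eq_mul, mul_comm]
        _ = ∑ w ∈ s, ∑ i, b i w := by exact Finset.sum_congr rfl fun w _ => (hcol w).symm
        _ = ∑ i, ∑ w ∈ s, b i w := Finset.sum_comm
        _ = ∑ i ∈ J, ∑ w ∈ s, b i w := by
            refine (Finset.sum_subset (Finset.subset_univ J) ?_).symm
            intro i _ hi
            simp only [hJ, Finset.mem_filter, Finset.mem_univ, true_and, not_exists] at hi
            push_neg at hi
            refine Finset.sum_eq_zero fun w hw => ?_
            have := hi w hw
            omega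
        _ ≤ ∑ i ∈ J, ∑ w, b i w := by
            refine Finset.sum_le_sum fun i _ => ?_
            exact Finset.sum_le_sum_of_subset (Finset.subset_univ s)
        _ = ∑ i ∈ J, M * k i := Finset.sum_congr rfl fun i _ => hrow i
        _ = M * ∑ i ∈ J, k i := by rw [Finset.mul_sum]
    exact Nat.le_of_mul_le_mul_left key (by omega)
  obtain ⟨f, hfinj, hf⟩ := (Finset.all_card_le_biUnion_card_iff_exists_injective t).mp hall
  set g : X → I := fun w => (f w).1 with hg
  set O : I → Finset X := fun i => Finset.univ.filter (fun w => g w = i) with hO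
  have hble : ∀ i w, w ∈ O i → 0 < b i w := by
    intro i w hw
    simp only [hO, Finset.mem_filter] at hw
    have := hf w
    simp only [htdef, Finset.mem_filter] at this
    rw [← hw.2]; exact this.2
  have hcardle : ∀ i, (O i).card ≤ k i := by
    intro i
    have : (O i).card ≤ (Finset.univ.filter (fun p : α => p.1 = i)).card := by
      apply Finset.card_le_card_of_injOn f
      · intro w hw
        simp only [hO, Finset.mem_coe, Finset.mem_filter] at hw
        simp only [Finset.mem_coe, Finset.mem_filter, Finset.mem_univ, true_and]
        exact hw.2
      · exact fun a _ b _ hab => hfinj hab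
    refine this.trans ?_
    have : Finset.univ.filter (fun p : α => p.1 = i) =
        ({i} : Finset I).sigma (fun j => (Finset.univ : Finset (Fin (k j)))) := by
      ext ⟨p1, p2⟩
      rw [Finset.mem_sigma]
      simp
    rw [this, Finset.card_sigma]
    simp
  have hsum2 : ∑ i, (O i).card = ∑ i, k i := by
    rw [hsum, ← Finset.card_univ (α := X)]
    exact (Finset.card_eq_sum_card_fiberwise (fun w _ => Finset.mem_univ (g w))).symm
  have hcards : ∀ i, (O i).card = k i := by
    intro i
    by_contra hc
    have hlt : (O i).card < k i := lt_of_le_of_ne (hcardle i) hc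
    have : ∑ j, (O j).card < ∑ j, k j :=
      Finset.sum_lt_sum (fun j _ => hcardle j) ⟨i, Finset.mem_univ i, hlt⟩
    omega
  refine ⟨O, ⟨hcards, ?_⟩, hble⟩
  intro w
  refine ⟨g w, ?_, ?_⟩
  · simp [hO]
  · intro i hi
    simp only [hO, Finset.mem_filter] at hi
    exact hi.2.symm

lemma exists_decomposition {k : I → ℕ} (hsum : ∑ i, k i = Fintype.card X) :
    ∀ (M : ℕ) (b : I → X → ℕ), (∀ w, ∑ i, b i w = M) → (∀ i, ∑ w, b i w = M * k i) →
    ∃ O : Fin M → I → Finset X, (∀ t, IsAllocation k (O t)) ∧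
      ∀ i w, (∑ t, if w ∈ O t i then 1 else 0) = b i w := by
  intro M
  induction M with
  | zero =>
    intro b hcol hrow
    refine ⟨Fin.elim0, fun t => t.elim0, fun i w => ?_⟩
    simp only [Finset.univ_eq_empty, Finset.sum_empty]
    have := hcol w
    have hle : b i w ≤ ∑ j, b j w :=
      Finset.single_le_sum (f := fun j => b j w) (fun j _ => Nat.zero_le _) (Finset.mem_univ i)
    omega
  | succ M IH =>
    intro b hcol hrow
    obtain ⟨A, hA, hAle⟩ := exists_allocation_le hsum (M+1) (by omega) b hcol hrow
    set b' : I → X → ℕ := fun i w => b i w - (if w ∈ A i then 1 else 0) with hb'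
    have hind : ∀ w, (∑ i, if w ∈ A i then 1 else 0) = 1 := by
      intro w
      obtain ⟨i0, hi0, hi0u⟩ := hA.2 w
      rw [Finset.sum_eq_single i0]
      · simp [hi0]
      · intro j _ hj
        simp only [ite_eq_right_iff]
        intro hw; exact absurd (hi0u j hw) hj
      · intro h; exact absurd (Finset.mem_univ i0) h
    have hptle : ∀ i w, (if w ∈ A i then 1 else 0) ≤ b i w := by
      intro i w
      split
      · next h => exact hAle i w h
      · exact Nat.zero_le _
    have hsplit : ∀ i w, b' i w + (if w ∈ A i then 1 else 0) = b i w := by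
      intro i w; exact Nat.sub_add_cancel (hptle i w)
    have hcol' : ∀ w, ∑ i, b' i w = M := by
      intro w
      have h1 : (∑ i, b' i w) + (∑ i, if w ∈ A i then 1 else 0) = ∑ i, b i w := by
        rw [← Finset.sum_add_distrib]
        exact Finset.sum_congr rfl fun i _ => hsplit i w
      rw [hind w, hcol w] at h1
      omega
    have hrow' : ∀ i, ∑ w, b' i w = M * k i := by
      intro i
      have h1 : (∑ w, b' i w) + (∑ w, if w ∈ A i then 1 else 0) = ∑ w, b i w := by
        rw [← Finset.sum_add_distrib]
        exact Finset.sum_congr rfl fun w _ => hsplit i w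
      have h2 : (∑ w, if w ∈ A i then 1 else 0) = k i := by
        rw [Finset.sum_ite_mem]
        simp [hA.1 i]
      rw [h2, hrow i, Nat.succ_mul] at h1
      omega
    obtain ⟨O', hO', hcnt⟩ := IH b' hcol' hrow'
    refine ⟨Fin.cons A O', ?_, ?_⟩
    · intro t
      refine Fin.cases ?_ ?_ t
      · simpa using hA
      · intro t'; simpa using hO' t'
    · intro i w
      rw [Fin.sum_univ_succ]
      simp only [Fin.cons_zero, Fin.cons_succ]
      rw [hcnt i w]
      rw [← hsplit i w]
      omega

lemma optimal_welfare_eq {v : I → X → ℝ} {k : I → ℕ} {O1 O2 : I → Finset X}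
    (h1 : IsOptimal v k O1) (h2 : IsOptimal v k O2) :
    socialWelfare v k O1 = socialWelfare v k O2 :=
  le_antisymm (h2.2 O1 h1.1) (h1.2 O2 h2.1)

lemma decomp_all_optimal {v : I → X → ℝ} {k : I → ℕ} {Oopt : I → Finset X}
    (hopt : IsOptimal v k Oopt) (M : ℕ) (O : Fin M → I → Finset X)
    (hOa : ∀ t, IsAllocation k (O t))
    (hsw : ∑ t, socialWelfare v k (O t) = M * socialWelfare v k Oopt) :
    ∀ t, IsOptimal v k (O t) := by
  have hle : ∀ t, socialWelfare v k (O t) ≤ socialWelfare v k Oopt :=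
    fun t => hopt.2 (O t) (hOa t)
  have heq : ∀ t, socialWelfare v k (O t) = socialWelfare v k Oopt := by
    intro t
    by_contra hc
    have hlt : socialWelfare v k (O t) < socialWelfare v k Oopt := lt_of_le_of_ne (hle t) hc
    have : ∑ s, socialWelfare v k (O s) < ∑ s : Fin M, socialWelfare v k Oopt :=
      Finset.sum_lt_sum (fun s _ => hle s) ⟨t, Finset.mem_univ t, hlt⟩
    rw [Finset.sum_const, Finset.card_univ, Fintype.card_fin, nsmul_eq_mul] at this
    linarith [hsw ▸ this]
  intro t
  exact ⟨hOa t, fun O'' hO'' => (heq t).symm ▸ hopt.2 O'' hO''⟩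

lemma forward
    (k : I → ℕ) (hsum : ∑ i, k i = Fintype.card X)
    (v : I → X → ℝ) (hv : ∀ i x, 0 ≤ v i x)
    (K : ℕ) (hK : 1 ≤ K)
    (Oenum : Fin K → I → Finset X)
    (hall : ∀ O : I → Finset X, IsOptimal v k O ↔ ∃ t, Oenum t = O)
    (a : I → X → ℝ)
    (ha : ∀ i x, a i x =
      ((Finset.univ.filter (fun t : Fin K => x ∈ Oenum t i)).card : ℝ) / K)
    (l : ℕ) (z : Fin (l + 1) → X) (jj : Fin (l + 1) → I)
    (hpos : ∀ s, 0 < a (jj s) (z s))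
    (hlt : ∀ s, a (jj s) (z (s + 1)) < 1)
    (hzero : (∑ s, (v (jj s) (z s) - v (jj s) (z (s + 1)))) = 0) :
    ∀ s0, 0 < a (jj s0) (z (s0 + 1)) ∧ a (jj s0) (z s0) < 1 := by
  classical
  -- basic counts
  set cnt : I → X → ℕ := fun i w => (Finset.univ.filter (fun t : Fin K => w ∈ Oenum t i)).card
    with hcnt
  have hOenumOpt : ∀ t, IsOptimal v k (Oenum t) := fun t => (hall (Oenum t)).mpr ⟨t, rfl⟩
  have hOenumAlloc : ∀ t, IsAllocation k (Oenum t) := fun t => (hOenumOpt t).1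
  set hd : I → X → ℕ :=
    fun i w => (Finset.univ.filter (fun s : Fin (l + 1) => jj s = i ∧ z (s + 1) = w)).card with hhd
  set tl : I → X → ℕ :=
    fun i w => (Finset.univ.filter (fun s : Fin (l + 1) => jj s = i ∧ z s = w)).card with htl
  -- if tail positive, a pos; if head positive, a lt
  have htl_pos : ∀ i w, 0 < tl i w → 0 < a i w := by
    intro i w h
    simp only [htl] at h; rw [Finset.card_pos] at h
    obtain ⟨s, hs⟩ := h
    rw [Finset.mem_filter] at hs
    obtain ⟨-, rfl, rfl⟩ := hs
    exact hpos s
  have hhd_lt : ∀ i w, 0 < hd i w → a i w < 1 := by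
    intro i w h
    simp only [hhd] at h; rw [Finset.card_pos] at h
    obtain ⟨s, hs⟩ := h
    rw [Finset.mem_filter] at hs
    obtain ⟨-, rfl, rfl⟩ := hs
    exact hlt s
  -- column sums of cnt
  have hcnt_col : ∀ w, ∑ i, cnt i w = K := by
    intro w
    have : ∀ i, cnt i w = ∑ t : Fin K, if w ∈ Oenum t i then 1 else 0 := by
      intro i; simp only [hcnt]; rw [Finset.card_filter]
    rw [Finset.sum_congr rfl fun i _ => this i, Finset.sum_comm]
    have : ∀ t : Fin K, (∑ i, if w ∈ Oenum t i then 1 else 0) = 1 := by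
      intro t
      obtain ⟨i0, hi0, hu⟩ := (hOenumAlloc t).2 w
      rw [Finset.sum_eq_single i0]
      · simp [hi0]
      · intro j _ hj
        simp only [ite_eq_right_iff]
        exact fun hw => absurd (hu j hw) hj
      · exact fun h => absurd (Finset.mem_univ i0) h
    rw [Finset.sum_congr rfl fun t _ => this t]
    simp
  have hcnt_row : ∀ i, ∑ w, cnt i w = K * k i := by
    intro i
    have : ∀ w, cnt i w = ∑ t : Fin K, if w ∈ Oenum t i then 1 else 0 := by
      intro w; simp only [hcnt]; rw [Finset.card_filter]
    rw [Finset.sum_congr rfl fun w _ => this w, Finset.sum_comm]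
    have : ∀ t : Fin K, (∑ w, if w ∈ Oenum t i then 1 else 0) = k i := by
      intro t
      rw [Finset.sum_ite_mem, Finset.univ_inter]
      simp [(hOenumAlloc t).1 i]
    rw [Finset.sum_congr rfl fun t _ => this t]
    simp [mul_comm]
  -- head/tail column sums
  have hhd_col : ∀ w, ∑ i, hd i w =
      (Finset.univ.filter (fun s : Fin (l + 1) => z (s + 1) = w)).card := by
    intro w
    have : ∀ i, hd i w = ∑ s : Fin (l + 1), if jj s = i ∧ z (s + 1) = w then 1 else 0 := by
      intro i; simp only [hhd]; rw [Finset.card_filter]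
    rw [Finset.sum_congr rfl fun i _ => this i, Finset.sum_comm, Finset.card_filter]
    refine Finset.sum_congr rfl fun s _ => ?_
    rw [Finset.sum_eq_single (jj s)]
    · simp
    · intro j _ hj; simp [Ne.symm hj]
    · exact fun h => absurd (Finset.mem_univ _) h
  have htl_col : ∀ w, ∑ i, tl i w =
      (Finset.univ.filter (fun s : Fin (l + 1) => z s = w)).card := by
    intro w
    have : ∀ i, tl i w = ∑ s : Fin (l + 1), if jj s = i ∧ z s = w then 1 else 0 := by
      intro i; simp only [htl]; rw [Finset.card_filter]
    rw [Finset.sum_congr rfl fun i _ => this i, Finset.sum_comm, Finset.card_filter]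
    refine Finset.sum_congr rfl fun s _ => ?_
    rw [Finset.sum_eq_single (jj s)]
    · simp
    · intro j _ hj; simp [Ne.symm hj]
    · exact fun h => absurd (Finset.mem_univ _) h
  have hshift : ∀ w, (Finset.univ.filter (fun s : Fin (l + 1) => z (s + 1) = w)).card =
      (Finset.univ.filter (fun s : Fin (l + 1) => z s = w)).card := by
    intro w
    rw [Finset.card_filter, Finset.card_filter]
    exact Fintype.sum_equiv (Equiv.addRight (1 : Fin (l + 1))) _ _ (fun s => rfl)
  -- head/tail row sums
  have hhd_row : ∀ i, ∑ w, hd i w =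
      (Finset.univ.filter (fun s : Fin (l + 1) => jj s = i)).card := by
    intro i
    have : ∀ w, hd i w = ∑ s : Fin (l + 1), if jj s = i ∧ z (s + 1) = w then 1 else 0 := by
      intro w; simp only [hhd]; rw [Finset.card_filter]
    rw [Finset.sum_congr rfl fun w _ => this w, Finset.sum_comm, Finset.card_filter]
    refine Finset.sum_congr rfl fun s _ => ?_
    rw [Finset.sum_eq_single (z (s + 1))]
    · simp
    · intro w _ hw; simp; intro _ h; exact absurd h.symm hw
    · exact fun h => absurd (Finset.mem_univ _) h
  have htl_row : ∀ i, ∑ w, tl i w =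
      (Finset.univ.filter (fun s : Fin (l + 1) => jj s = i)).card := by
    intro i
    have : ∀ w, tl i w = ∑ s : Fin (l + 1), if jj s = i ∧ z s = w then 1 else 0 := by
      intro w; simp only [htl]; rw [Finset.card_filter]
    rw [Finset.sum_congr rfl fun w _ => this w, Finset.sum_comm, Finset.card_filter]
    refine Finset.sum_congr rfl fun s _ => ?_
    rw [Finset.sum_eq_single (z s)]
    · simp
    · intro w _ hw; simp; intro _ h; exact absurd h.symm hw
    · exact fun h => absurd (Finset.mem_univ _) h
  -- the modified matrix
  have htl_le : ∀ i w, tl i w ≤ (l + 1) * cnt i w := by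
    intro i w
    rcases Nat.eq_zero_or_pos (tl i w) with h | h
    · omega
    · have h1 : 0 < a i w := htl_pos i w h
      rw [a_pos_iff hK Oenum a ha] at h1
      obtain ⟨t, ht⟩ := h1
      have h2 : 0 < cnt i w := by
        simp only [hcnt]; rw [Finset.card_pos]; exact ⟨t, by simp [ht]⟩
      have h3 : tl i w ≤ (l + 1) := by
        simp only [htl]
        calc (Finset.univ.filter (fun s : Fin (l + 1) => jj s = i ∧ z s = w)).card
            ≤ (Finset.univ : Finset (Fin (l + 1))).card := Finset.card_le_card (Finset.subset_univ _)
          _ = (l + 1) := by simp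
      calc tl i w ≤ (l + 1) := h3
        _ ≤ (l + 1) * cnt i w := Nat.le_mul_of_pos_right (l + 1) h2
  set b' : I → X → ℕ := fun i w => (l + 1) * cnt i w + hd i w - tl i w with hb'
  have hb'split : ∀ i w, b' i w + tl i w = (l + 1) * cnt i w + hd i w := by
    intro i w
    simp only [hb']
    have := htl_le i w
    omega
  have hcol' : ∀ w, ∑ i, b' i w = (l + 1) * K := by
    intro w
    have h1 : (∑ i, b' i w) + (∑ i, tl i w) = (∑ i, ((l + 1) * cnt i w + hd i w)) := by
      rw [← Finset.sum_add_distrib]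
      exact Finset.sum_congr rfl fun i _ => hb'split i w
    rw [Finset.sum_add_distrib, ← Finset.mul_sum, hcnt_col w, hhd_col w, htl_col w,
      hshift w] at h1
    omega
  have hrow' : ∀ i, ∑ w, b' i w = ((l + 1) * K) * k i := by
    intro i
    have h1 : (∑ w, b' i w) + (∑ w, tl i w) = (∑ w, ((l + 1) * cnt i w + hd i w)) := by
      rw [← Finset.sum_add_distrib]
      exact Finset.sum_congr rfl fun w _ => hb'split i w
    rw [Finset.sum_add_distrib, ← Finset.mul_sum, hcnt_row i, hhd_row i, htl_row i] at h1
    have : (l + 1) * (K * k i) = (l + 1) * K * k i := by ring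
    omega
  obtain ⟨OD, hODa, hODcnt⟩ := exists_decomposition hsum ((l + 1) * K) b' hcol' hrow'
  -- welfare computation
  set t0 : Fin K := ⟨0, by omega⟩ with ht0
  have hOopt : IsOptimal v k (Oenum t0) := hOenumOpt t0
  set W : ℝ := socialWelfare v k (Oenum t0) with hW
  have hsw_formula : ∀ (m : ℕ) (O : Fin m → I → Finset X), (∀ t, IsAllocation k (O t)) →
      ∑ t, socialWelfare v k (O t) =
      ∑ i, ∑ w, (∑ t, if w ∈ O t i then (1:ℝ) else 0) * v i w := by
    intro m O hOa
    rw [Finset.sum_congr rfl fun t _ => socialWelfare_eq hv (hOa t)]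
    have h1 : ∀ (t : Fin m) i, (∑ w ∈ O t i, v i w) = ∑ w, if w ∈ O t i then v i w else 0 := by
      intro t i
      rw [Finset.sum_ite_mem, Finset.univ_inter]
    calc ∑ t, ∑ i, ∑ w ∈ O t i, v i w
        = ∑ t, ∑ i, ∑ w, if w ∈ O t i then v i w else 0 := by
          exact Finset.sum_congr rfl fun t _ => Finset.sum_congr rfl fun i _ => h1 t i
      _ = ∑ i, ∑ w, ∑ t, if w ∈ O t i then v i w else 0 := by
          rw [Finset.sum_comm]
          exact Finset.sum_congr rfl fun i _ => Finset.sum_comm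
      _ = ∑ i, ∑ w, (∑ t, if w ∈ O t i then (1:ℝ) else 0) * v i w := by
          refine Finset.sum_congr rfl fun i _ => Finset.sum_congr rfl fun w _ => ?_
          rw [Finset.sum_mul]
          refine Finset.sum_congr rfl fun t _ => ?_
          split <;> simp
  have hKW : ∑ i, ∑ w, (cnt i w : ℝ) * v i w = K * W := by
    have h1 : ∑ t : Fin K, socialWelfare v k (Oenum t) = K * W := by
      rw [Finset.sum_congr rfl fun t _ => optimal_welfare_eq (hOenumOpt t) hOopt]
      simp [hW, Finset.sum_const, Finset.card_univ]
    rw [hsw_formula K Oenum hOenumAlloc] at h1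
    rw [← h1]
    refine Finset.sum_congr rfl fun i _ => Finset.sum_congr rfl fun w _ => ?_
    congr 1
    simp only [hcnt]
    rw [Finset.card_filter]
    push_cast
    rfl
  have hhd_sum : ∑ i, ∑ w, (hd i w : ℝ) * v i w = ∑ s : Fin (l + 1), v (jj s) (z (s + 1)) := by
    have h1 : ∀ i w, (hd i w : ℝ) * v i w =
        ∑ s : Fin (l + 1), if jj s = i ∧ z (s + 1) = w then v i w else 0 := by
      intro i w
      simp only [hhd]; rw [ Finset.card_filter]
      push_cast
      rw [Finset.sum_mul]
      refine Finset.sum_congr rfl fun s _ => ?_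
      split <;> simp
    rw [Finset.sum_congr rfl fun i _ => Finset.sum_congr rfl fun w _ => h1 i w]
    rw [Finset.sum_congr rfl fun i (_ : i ∈ Finset.univ) => Finset.sum_comm]
    rw [Finset.sum_comm]
    refine Finset.sum_congr rfl fun s _ => ?_
    rw [Finset.sum_eq_single (jj s)]
    · rw [Finset.sum_eq_single (z (s + 1))]
      · simp
      · intro w _ hw
        simp only [ite_eq_right_iff]
        rintro ⟨-, h⟩; exact absurd h.symm hw
      · exact fun h => absurd (Finset.mem_univ _) h
    · intro j _ hj
      refine Finset.sum_eq_zero fun w _ => ?_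
      simp only [ite_eq_right_iff]
      rintro ⟨h1', -⟩; exact absurd h1'.symm hj
    · exact fun h => absurd (Finset.mem_univ _) h
  have htl_sum : ∑ i, ∑ w, (tl i w : ℝ) * v i w = ∑ s : Fin (l + 1), v (jj s) (z s) := by
    have h1 : ∀ i w, (tl i w : ℝ) * v i w =
        ∑ s : Fin (l + 1), if jj s = i ∧ z s = w then v i w else 0 := by
      intro i w
      simp only [htl]; rw [ Finset.card_filter]
      push_cast
      rw [Finset.sum_mul]
      refine Finset.sum_congr rfl fun s _ => ?_
      split <;> simp
    rw [Finset.sum_congr rfl fun i _ => Finset.sum_congr rfl fun w _ => h1 i w]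
    rw [Finset.sum_congr rfl fun i (_ : i ∈ Finset.univ) => Finset.sum_comm]
    rw [Finset.sum_comm]
    refine Finset.sum_congr rfl fun s _ => ?_
    rw [Finset.sum_eq_single (jj s)]
    · rw [Finset.sum_eq_single (z s)]
      · simp
      · intro w _ hw
        simp only [ite_eq_right_iff]
        rintro ⟨-, h⟩; exact absurd h.symm hw
      · exact fun h => absurd (Finset.mem_univ _) h
    · intro j _ hj
      refine Finset.sum_eq_zero fun w _ => ?_
      simp only [ite_eq_right_iff]
      rintro ⟨h1', -⟩; exact absurd h1'.symm hj
    · exact fun h => absurd (Finset.mem_univ _) h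
  -- total welfare of the decomposition
  have hODsw : ∑ t, socialWelfare v k (OD t) = ((l + 1) * K : ℕ) * W := by
    rw [hsw_formula ((l + 1) * K) OD hODa]
    have hcast : ∀ i w, (∑ t, if w ∈ OD t i then (1:ℝ) else 0) = (b' i w : ℝ) := by
      intro i w
      rw [← hODcnt i w]
      push_cast
      rfl
    have hrw : ∑ i, ∑ w, (∑ t, if w ∈ OD t i then (1:ℝ) else 0) * v i w
        = ∑ i, ∑ w, (b' i w : ℝ) * v i w :=
      Finset.sum_congr rfl fun i _ => Finset.sum_congr rfl fun w _ => by rw [hcast i w]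
    rw [hrw]
    have hb'cast : ∀ i w, (b' i w : ℝ) = (l + 1) * cnt i w + hd i w - tl i w := by
      intro i w
      have := hb'split i w
      have : ((b' i w : ℕ) : ℝ) + tl i w = (l + 1) * cnt i w + hd i w := by exact_mod_cast congrArg (Nat.cast (R := ℝ)) this
      linarith
    calc ∑ i, ∑ w, (b' i w : ℝ) * v i w
        = ∑ i, ∑ w, (((l + 1) : ℝ) * cnt i w * v i w + ((hd i w : ℝ) * v i w - (tl i w : ℝ) * v i w)) := by
          refine Finset.sum_congr rfl fun i _ => Finset.sum_congr rfl fun w _ => ?_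
          rw [hb'cast i w]; ring
      _ = ((l + 1) : ℝ) * (∑ i, ∑ w, (cnt i w : ℝ) * v i w)
            + ((∑ i, ∑ w, (hd i w : ℝ) * v i w) - (∑ i, ∑ w, (tl i w : ℝ) * v i w)) := by
          rw [Finset.mul_sum]
          rw [← Finset.sum_sub_distrib, ← Finset.sum_add_distrib]
          refine Finset.sum_congr rfl fun i _ => ?_
          rw [Finset.mul_sum, ← Finset.sum_sub_distrib, ← Finset.sum_add_distrib]
          refine Finset.sum_congr rfl fun w _ => ?_
          ring
      _ = ((l + 1) : ℝ) * (K * W) + ((∑ s : Fin (l + 1), v (jj s) (z (s + 1))) - (∑ s : Fin (l + 1), v (jj s) (z s))) := by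
          rw [hKW, hhd_sum, htl_sum]
      _ = ((l + 1) : ℝ) * (K * W) - (∑ s : Fin (l + 1), (v (jj s) (z s) - v (jj s) (z (s + 1)))) := by
          rw [Finset.sum_sub_distrib]; ring
      _ = ((l + 1) * K : ℕ) * W := by rw [hzero]; push_cast; ring
  have hODopt : ∀ t, IsOptimal v k (OD t) :=
    decomp_all_optimal hOopt ((l + 1) * K) OD hODa hODsw
  have hNK : 1 ≤ (l + 1) * K := Nat.one_le_iff_ne_zero.mpr (by positivity)
  have hcnt_le : ∀ i w, cnt i w ≤ K := by
    intro i w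
    calc cnt i w ≤ (Finset.univ : Finset (Fin K)).card := Finset.card_le_card (Finset.subset_univ _)
      _ = K := by simp
  intro s0
  constructor
  · -- 0 < a (jj s0) (z (s0 + 1))
    set i := jj s0
    set w := z (s0 + 1)
    rcases Nat.eq_zero_or_pos (tl i w) with htlz | htlp
    · have hhd1 : 1 ≤ hd i w := by
        simp only [hhd]; rw [ Nat.one_le_iff_ne_zero, ← Nat.pos_iff_ne_zero, Finset.card_pos]
        exact ⟨s0, Finset.mem_filter.mpr ⟨Finset.mem_univ _, rfl, rfl⟩⟩
      have hb'pos : 0 < b' i w := by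
        simp only [hb']
        omega
      rw [← hODcnt i w] at hb'pos
      have : ∃ t, w ∈ OD t i := by
        by_contra hc
        push_neg at hc
        rw [Finset.sum_eq_zero (fun t _ => if_neg (hc t))] at hb'pos
        omega
      obtain ⟨t, ht⟩ := this
      obtain ⟨t', ht'⟩ := (hall (OD t)).mp (hODopt t)
      rw [a_pos_iff hK Oenum a ha]
      exact ⟨t', by rw [ht']; exact ht⟩
    · exact htl_pos i w htlp
  · -- a (jj s0) (z s0) < 1
    set i := jj s0
    set w := z s0
    rcases Nat.eq_zero_or_pos (hd i w) with hhdz | hhdp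
    · have htl1 : 1 ≤ tl i w := by
        simp only [htl]; rw [ Nat.one_le_iff_ne_zero, ← Nat.pos_iff_ne_zero, Finset.card_pos]
        exact ⟨s0, Finset.mem_filter.mpr ⟨Finset.mem_univ _, rfl, rfl⟩⟩
      have hb'lt : b' i w < (l + 1) * K := by
        simp only [hb']
        have := hcnt_le i w
        have hNc : (l + 1) * cnt i w ≤ (l + 1) * K := Nat.mul_le_mul_left (l + 1) this
        omega
      rw [← hODcnt i w] at hb'lt
      have : ∃ t, w ∉ OD t i := by
        by_contra hc
        push_neg at hc
        rw [Finset.sum_congr rfl (fun t _ => if_pos (hc t)), Finset.sum_const,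
          Finset.card_univ, Fintype.card_fin, smul_eq_mul, mul_one] at hb'lt
        omega
      obtain ⟨t, ht⟩ := this
      obtain ⟨t', ht'⟩ := (hall (OD t)).mp (hODopt t)
      rw [a_lt_one_iff hK Oenum a ha]
      exact ⟨t', by rw [ht']; exact ht⟩
    · exact hhd_lt i w hhdp

/-- Swapping owners on a balanced set preserves being an allocation. -/
lemma swap_allocation {v : I → X → ℝ} {k : I → ℕ} {O O' : I → Finset X}
    (hOa : IsAllocation k O) (hO'a : IsAllocation k O') (orb : Finset X)
    (hbal : ∀ j, (orb.filter (fun w => owner hOa w = j)).card =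
      (orb.filter (fun w => owner hO'a w = j)).card) :
    IsAllocation k (fun j => Finset.univ.filter
      (fun w => (if w ∈ orb then owner hO'a w else owner hOa w) = j)) := by
  set σ := owner hOa with hσ
  set σ' := owner hO'a with hσ'
  set τ : X → I := fun w => if w ∈ orb then σ' w else σ w with hτ
  have hsplitcard : ∀ (f : X → I) (j : I), (Finset.univ.filter (fun w => f w = j)).card =
      (orb.filter (fun w => f w = j)).card +
      ((Finset.univ \ orb).filter (fun w => f w = j)).card := by
    intro f j
    rw [← Finset.card_union_of_disjoint, ← Finset.filter_union,
      Finset.union_sdiff_of_subset (Finset.subset_univ orb)]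
    exact Finset.disjoint_filter_filter (Finset.disjoint_sdiff)
  constructor
  · intro j
    have h1 : (orb.filter (fun w => τ w = j)) = (orb.filter (fun w => σ' w = j)) := by
      apply Finset.filter_congr
      intro w hw
      simp [hτ, hw]
    have h2 : ((Finset.univ \ orb).filter (fun w => τ w = j)) =
        ((Finset.univ \ orb).filter (fun w => σ w = j)) := by
      apply Finset.filter_congr
      intro w hw
      rw [Finset.mem_sdiff] at hw
      simp [hτ, hw.2]
    rw [hsplitcard τ j, h1, h2, ← hbal j, ← hsplitcard σ j]
    have : Finset.univ.filter (fun w => σ w = j) = O j := by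
      ext w
      simp only [Finset.mem_filter, Finset.mem_univ, true_and]
      exact (owner_spec hOa w j).symm
    rw [this]
    exact hOa.1 j
  · intro w
    refine ⟨τ w, by simp [hτ], ?_⟩
    intro j hj
    simp only [Finset.mem_filter] at hj
    exact hj.2.symm

lemma swap_sum_le {v : I → X → ℝ} (hv : ∀ i x, 0 ≤ v i x) {k : I → ℕ} {O O' : I → Finset X}
    (hO : IsOptimal v k O) (hO'a : IsAllocation k O') (orb : Finset X)
    (hbal : ∀ j, (orb.filter (fun w => owner hO.1 w = j)).card =
      (orb.filter (fun w => owner hO'a w = j)).card) :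
    ∑ w ∈ orb, v (owner hO'a w) w ≤ ∑ w ∈ orb, v (owner hO.1 w) w := by
  set σ := owner hO.1 with hσ
  set σ' := owner hO'a with hσ'
  set τ : X → I := fun w => if w ∈ orb then σ' w else σ w with hτ
  set O'' : I → Finset X := fun j => Finset.univ.filter (fun w => τ w = j) with hO''
  have hO''a : IsAllocation k O'' := swap_allocation (v := v) hO.1 hO'a orb hbal
  have hle := hO.2 O'' hO''a
  rw [socialWelfare_eq_owner hv hO''a, socialWelfare_eq_owner hv hO.1] at hle
  have hown'' : ∀ w, owner hO''a w = τ w := by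
    intro w
    refine owner_eq hO''a ?_
    simp [hO'']
  rw [Finset.sum_congr rfl fun w _ => by rw [hown'' w]] at hle
  -- split both sides over orb and its complement
  have hsplit : ∀ (f : X → I), ∑ w, v (f w) w =
      (∑ w ∈ Finset.univ \ orb, v (f w) w) + ∑ w ∈ orb, v (f w) w := by
    intro f
    exact (Finset.sum_sdiff (Finset.subset_univ orb)).symm
  rw [hsplit τ, hsplit σ] at hle
  have h1 : ∑ w ∈ Finset.univ \ orb, v (τ w) w = ∑ w ∈ Finset.univ \ orb, v (σ w) w := by
    refine Finset.sum_congr rfl fun w hw => ?_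
    rw [Finset.mem_sdiff] at hw
    simp [hτ, hw.2]
  have h2 : ∑ w ∈ orb, v (τ w) w = ∑ w ∈ orb, v (σ' w) w := by
    refine Finset.sum_congr rfl fun w hw => ?_
    simp [hτ, hw]
  rw [h1, h2] at hle
  linarith

lemma swap_sum_eq {v : I → X → ℝ} (hv : ∀ i x, 0 ≤ v i x) {k : I → ℕ} {O O' : I → Finset X}
    (hO : IsOptimal v k O) (hO' : IsOptimal v k O') (orb : Finset X)
    (hbal : ∀ j, (orb.filter (fun w => owner hO.1 w = j)).card =
      (orb.filter (fun w => owner hO'.1 w = j)).card) :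
    ∑ w ∈ orb, v (owner hO'.1 w) w = ∑ w ∈ orb, v (owner hO.1 w) w := by
  have h1 := swap_sum_le hv hO hO'.1 orb hbal
  have h2 := swap_sum_le hv hO' hO.1 orb (fun j => (hbal j).symm)
  linarith

lemma exists_good_fun {s t : Finset X} (h : s.card = t.card) {x0 u0 : X}
    (hx0 : x0 ∈ s) (hu0 : u0 ∈ t) :
    ∃ f : X → X, (∀ w ∈ s, f w ∈ t) ∧ (Set.InjOn f ↑s) ∧
      (∀ z ∈ t, ∃ w ∈ s, f w = z) ∧ f x0 = u0 := by
  classical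
  set e : ↥s ≃ ↥t :=
    (Finset.equivOfCardEq h).trans (Equiv.swap (Finset.equivOfCardEq h ⟨x0, hx0⟩) ⟨u0, hu0⟩)
    with he
  have hex0 : e ⟨x0, hx0⟩ = ⟨u0, hu0⟩ := by
    simp [he, Equiv.swap_apply_left]
  refine ⟨fun w => if hw : w ∈ s then (e ⟨w, hw⟩ : X) else w, ?_, ?_, ?_, ?_⟩
  · intro w hw
    dsimp only
    rw [dif_pos hw]
    exact (e ⟨w, hw⟩).2
  · intro w1 hw1 w2 hw2 heq
    rw [Finset.mem_coe] at hw1 hw2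
    dsimp only at heq
    rw [dif_pos hw1, dif_pos hw2] at heq
    have := e.injective (Subtype.ext heq)
    exact congrArg Subtype.val this
  · intro z hz
    refine ⟨(e.symm ⟨z, hz⟩ : X), (e.symm ⟨z, hz⟩).2, ?_⟩
    dsimp only
    rw [dif_pos (e.symm ⟨z, hz⟩).2]
    have : (⟨(e.symm ⟨z, hz⟩ : X), (e.symm ⟨z, hz⟩).2⟩ : ↥s) = e.symm ⟨z, hz⟩ := rfl
    rw [this, e.apply_symm_apply]
  · dsimp only
    rw [dif_pos hx0]
    rw [hex0]

lemma exists_fcycle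
    {k : I → ℕ} (v : I → X → ℝ) (hv : ∀ i x, 0 ≤ v i x)
    (K : ℕ) (hK : 1 ≤ K) (Oenum : Fin K → I → Finset X)
    (hall : ∀ O : I → Finset X, IsOptimal v k O ↔ ∃ t, Oenum t = O)
    (a : I → X → ℝ)
    (ha : ∀ i x, a i x =
      ((Finset.univ.filter (fun t : Fin K => x ∈ Oenum t i)).card : ℝ) / K)
    {O O' : I → Finset X} (hO : IsOptimal v k O) (hO' : IsOptimal v k O')
    (i0 : I) (x0 u0 : X)
    (hx0 : x0 ∈ O' i0) (hx0' : x0 ∉ O i0) (hu0 : u0 ∈ O i0) (hu0' : u0 ∉ O' i0) :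
    ∃ n, 1 ≤ n ∧ ∃ (g : ℕ → X) (jf : ℕ → I),
      g 0 = x0 ∧ g 1 = u0 ∧ g n = x0 ∧ jf 0 = i0 ∧
      (∀ s, 0 < a (jf s) (g s)) ∧ (∀ s, a (jf s) (g (s + 1)) < 1) ∧
      ∑ s ∈ Finset.range n, (v (jf s) (g s) - v (jf s) (g (s + 1))) = 0 := by
  classical
  set σ : X → I := owner hO.1 with hσdef
  set σ' : X → I := owner hO'.1 with hσ'def
  have hcard : ∀ j, (O' j \ O j).card = (O j \ O' j).card := by
    intro j
    have h1 := Finset.card_sdiff_add_card_inter (O' j) (O j)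
    have h2 := Finset.card_sdiff_add_card_inter (O j) (O' j)
    rw [Finset.inter_comm] at h2
    rw [hO.1.1 j] at h2
    rw [hO'.1.1 j] at h1
    omega
  have hch : ∀ j, ∃ f : X → X, (∀ w ∈ O' j \ O j, f w ∈ O j \ O' j) ∧
      (Set.InjOn f ↑(O' j \ O j)) ∧
      (∀ z ∈ O j \ O' j, ∃ w ∈ O' j \ O j, f w = z) ∧ (j = i0 → f x0 = u0) := by
    intro j
    by_cases hj : j = i0
    · subst hj
      obtain ⟨f, h1, h2, h3, h4⟩ := exists_good_fun (hcard j)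
        (Finset.mem_sdiff.mpr ⟨hx0, hx0'⟩) (Finset.mem_sdiff.mpr ⟨hu0, hu0'⟩)
      exact ⟨f, h1, h2, h3, fun _ => h4⟩
    · rcases Finset.eq_empty_or_nonempty (O' j \ O j) with hemp | ⟨w1, hw1⟩
      · refine ⟨id, ?_, ?_, ?_, fun h => absurd h hj⟩
        · intro w hw; rw [hemp] at hw; exact absurd hw (Finset.notMem_empty w)
        · intro w hw w' hw' h; exact h
        · intro z hz
          exfalso
          have hc0 : (O j \ O' j) = ∅ := by
            rw [← Finset.card_eq_zero, ← hcard j, hemp]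
            simp
          rw [hc0] at hz
          exact Finset.notMem_empty z hz
      · have hne2 : (O j \ O' j).Nonempty := by
          rw [← Finset.card_pos, ← hcard j, Finset.card_pos]; exact ⟨w1, hw1⟩
        obtain ⟨z1, hz1⟩ := hne2
        obtain ⟨f, h1, h2, h3, _⟩ := exists_good_fun (hcard j) hw1 hz1
        exact ⟨f, h1, h2, h3, fun h => absurd h hj⟩
  choose ff hfmap hfinj hfsurj hfpres using hch
  set P : X → Prop := fun w => w ∈ O' (σ' w) \ O (σ' w) with hPdef
  set F : X → X := fun w => if P w then ff (σ' w) w else w with hFdef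
  -- ownership basics
  have hself' : ∀ w, w ∈ O' (σ' w) := fun w => mem_owner hO'.1 w
  have hself : ∀ w, w ∈ O (σ w) := fun w => mem_owner hO.1 w
  have hFmem : ∀ w, P w → F w ∈ O (σ' w) \ O' (σ' w) := by
    intro w hw
    have : F w = ff (σ' w) w := by rw [hFdef]; simp only [if_pos hw]
    rw [this]
    exact hfmap (σ' w) w hw
  have hσF : ∀ w, P w → σ (F w) = σ' w := by
    intro w hw
    exact owner_eq hO.1 (Finset.mem_sdiff.mp (hFmem w hw)).1
  have hFnotmem' : ∀ w, P w → F w ∉ O' (σ' w) := by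
    intro w hw
    exact (Finset.mem_sdiff.mp (hFmem w hw)).2
  have hPF : ∀ w, P w → P (F w) := by
    intro w hw
    rw [hPdef]
    refine Finset.mem_sdiff.mpr ⟨hself' (F w), ?_⟩
    intro hc
    have h1 : σ (F w) = σ' (F w) := owner_eq hO.1 hc
    have h2 : σ (F w) = σ' w := hσF w hw
    exact hFnotmem' w hw (h2 ▸ h1 ▸ hself' (F w))
  have hFid : ∀ w, ¬ P w → F w = w := by
    intro w hw; rw [hFdef]; simp only [if_neg hw]
  have hFinj : Function.Injective F := by
    intro w1 w2 heq
    by_cases h1 : P w1 <;> by_cases h2 : P w2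
    · have hj : σ' w1 = σ' w2 := by
        rw [← hσF w1 h1, ← hσF w2 h2, heq]
      have e1 : F w1 = ff (σ' w1) w1 := by rw [hFdef]; simp only [if_pos h1]
      have e2 : F w2 = ff (σ' w2) w2 := by rw [hFdef]; simp only [if_pos h2]
      refine hfinj (σ' w1) ?_ ?_ ?_
      · exact Finset.mem_coe.mpr h1
      · rw [hj]; exact Finset.mem_coe.mpr h2
      · rw [← e1]
        calc F w1 = F w2 := heq
          _ = ff (σ' w2) w2 := e2
          _ = ff (σ' w1) w2 := by rw [hj]
    · exfalso
      have := hPF w1 h1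
      rw [heq, hFid w2 h2] at this
      exact h2 this
    · exfalso
      have := hPF w2 h2
      rw [← heq, hFid w1 h1] at this
      exact h1 this
    · rw [hFid w1 h1, hFid w2 h2] at heq; exact heq
  have hFbij : Function.Bijective F := Finite.injective_iff_bijective.mp hFinj
  set eF : Equiv.Perm X := Equiv.ofBijective F hFbij with heF
  have hn1pos : 0 < orderOf eF := orderOf_pos eF
  have hFiter : F^[orderOf eF] x0 = x0 := by
    have h1 : eF ^ orderOf eF = 1 := pow_orderOf_eq_one eF
    have h2 : (eF ^ orderOf eF) x0 = x0 := by rw [h1]; rfl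
    rw [Equiv.Perm.coe_pow] at h2
    exact h2
  have hper : Function.IsPeriodicPt F (orderOf eF) x0 := hFiter
  set n : ℕ := Function.minimalPeriod F x0 with hndef
  have hn : 0 < n := Function.IsPeriodicPt.minimalPeriod_pos hn1pos hper
  set g : ℕ → X := fun s => F^[s] x0 with hgdef
  have hgsucc : ∀ s, g (s + 1) = F (g s) := by
    intro s; rw [hgdef]; simp [Function.iterate_succ_apply']
  have hgn : g n = x0 := Function.iterate_minimalPeriod
  -- the orbit satisfies P everywhere
  have hσ'x0 : σ' x0 = i0 := owner_eq hO'.1 hx0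
  have hPx0 : P x0 := by
    rw [hPdef]
    refine Finset.mem_sdiff.mpr ⟨hself' x0, ?_⟩
    rw [hσ'x0]
    exact hx0'
  have hPg : ∀ s, P (g s) := by
    intro s
    induction s with
    | zero => exact hPx0
    | succ m ihm => rw [hgsucc m]; exact hPF _ ihm
  -- first step
  have hg1 : g 1 = u0 := by
    have : g 1 = F x0 := by rw [hgdef]; simp
    rw [this, hFdef]
    simp only [if_pos hPx0]
    rw [hσ'x0]
    exact hfpres i0 rfl
  -- conditions
  set jf : ℕ → I := fun s => σ' (g s) with hjfdef
  obtain ⟨t', ht'⟩ := (hall O').mp hO'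
  have hapos : ∀ s, 0 < a (jf s) (g s) := by
    intro s
    rw [a_pos_iff hK Oenum a ha]
    exact ⟨t', by rw [ht']; exact hself' (g s)⟩
  have halt : ∀ s, a (jf s) (g (s + 1)) < 1 := by
    intro s
    rw [a_lt_one_iff hK Oenum a ha]
    refine ⟨t', ?_⟩
    rw [ht']
    rw [hgsucc s]
    exact hFnotmem' (g s) (hPg s)
  -- the orbit as a finset
  set orb : Finset X := (Finset.range n).image g with horb
  have hginj : Set.InjOn g (Set.Iio n) := Function.iterate_injOn_Iio_minimalPeriod
  have hginj' : ∀ s1 ∈ Finset.range n, ∀ s2 ∈ Finset.range n, g s1 = g s2 → s1 = s2 := by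
    intro s1 h1 s2 h2 h
    exact hginj (Finset.mem_range.mp h1) (Finset.mem_range.mp h2) h
  have horbmem : ∀ w ∈ orb, ∃ s, s < n ∧ g s = w := by
    intro w hw
    rw [horb, Finset.mem_image] at hw
    obtain ⟨s, hs, hgs⟩ := hw
    exact ⟨s, Finset.mem_range.mp hs, hgs⟩
  have hgorb : ∀ s, s < n → g s ∈ orb := by
    intro s hs
    rw [horb, Finset.mem_image]
    exact ⟨s, Finset.mem_range.mpr hs, rfl⟩
  have hForb : ∀ w ∈ orb, F w ∈ orb := by
    intro w hw
    obtain ⟨s, hs, rfl⟩ := horbmem w hw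
    rw [← hgsucc s]
    rcases Nat.lt_or_ge (s + 1) n with h | h
    · exact hgorb _ h
    · have : s + 1 = n := by omega
      rw [this, hgn]
      have : g 0 = x0 := rfl
      rw [← this]
      exact hgorb 0 hn
  have hPorb : ∀ w ∈ orb, P w := by
    intro w hw
    obtain ⟨s, _, rfl⟩ := horbmem w hw
    exact hPg s
  -- balance
  have hbal : ∀ j, (orb.filter (fun w => σ w = j)).card =
      (orb.filter (fun w => σ' w = j)).card := by
    intro j
    refine (Finset.card_bij (fun w _ => F w) ?_ ?_ ?_).symm
    · intro w hw
      rw [Finset.mem_filter] at hw ⊢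
      refine ⟨hForb w hw.1, ?_⟩
      rw [hσF w (hPorb w hw.1)]
      exact hw.2
    · intro w1 h1 w2 h2 h
      exact hFinj h
    · intro z hz
      rw [Finset.mem_filter] at hz
      obtain ⟨s, hs, rfl⟩ := horbmem z hz.1
      rcases Nat.eq_zero_or_pos s with rfl | hspos
      · refine ⟨g (n - 1), ?_, ?_⟩
        · rw [Finset.mem_filter]
          have hmem : g (n - 1) ∈ orb := hgorb _ (by omega)
          refine ⟨hmem, ?_⟩
          have hF : F (g (n - 1)) = g 0 := by
            rw [← hgsucc (n - 1)]
            have : n - 1 + 1 = n := by omega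
            rw [this, hgn]
            rfl
          have h5 := hσF _ (hPorb _ hmem)
          rw [hF] at h5
          rw [← h5]
          exact hz.2
        · show F (g (n - 1)) = g 0
          rw [← hgsucc (n - 1)]
          have : n - 1 + 1 = n := by omega
          rw [this, hgn]
          rfl
      · refine ⟨g (s - 1), ?_, ?_⟩
        · rw [Finset.mem_filter]
          have hmem : g (s - 1) ∈ orb := hgorb _ (by omega)
          refine ⟨hmem, ?_⟩
          have hF : F (g (s - 1)) = g s := by
            rw [← hgsucc (s - 1)]
            congr 1
            omega
          have h5 := hσF _ (hPorb _ hmem)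
          rw [hF] at h5
          rw [← h5]
          exact hz.2
        · show F (g (s - 1)) = g s
          rw [← hgsucc (s - 1)]
          congr 1
          omega
  have hswap := swap_sum_eq hv hO hO' orb hbal
  -- the sum
  refine ⟨n, hn, g, jf, rfl, hg1, hgn, by rw [hjfdef]; exact hσ'x0, hapos, halt, ?_⟩
  have hstep : ∀ s, v (jf s) (g (s + 1)) = v (σ (g (s + 1))) (g (s + 1)) := by
    intro s
    rw [hjfdef]
    rw [hgsucc s, hσF _ (hPg s)]
  rw [Finset.sum_sub_distrib]
  have h2 : ∑ s ∈ Finset.range n, v (jf s) (g (s + 1)) =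
      ∑ s ∈ Finset.range n, v (σ (g s)) (g s) := by
    rw [Finset.sum_congr rfl fun s _ => hstep s]
    have ha1 : ∑ s ∈ Finset.range (n + 1), v (σ (g s)) (g s)
        = (∑ s ∈ Finset.range n, v (σ (g (s + 1))) (g (s + 1))) + v (σ (g 0)) (g 0) := by
      rw [Finset.sum_range_succ']
    have ha2 : ∑ s ∈ Finset.range (n + 1), v (σ (g s)) (g s)
        = (∑ s ∈ Finset.range n, v (σ (g s)) (g s)) + v (σ (g n)) (g n) := by
      rw [Finset.sum_range_succ]
    have ha3 : v (σ (g n)) (g n) = v (σ (g 0)) (g 0) := by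
      rw [hgn]; rfl
    linarith
  rw [h2]
  have h1 : ∑ s ∈ Finset.range n, v (jf s) (g s) =
      ∑ w ∈ orb, v (σ' w) w := by
    rw [horb, Finset.sum_image hginj']
  have h3 : ∑ s ∈ Finset.range n, v (σ (g s)) (g s) =
      ∑ w ∈ orb, v (σ w) w := by
    rw [horb, Finset.sum_image hginj']
  rw [h1, h3, hswap, sub_self]

end MDM

set_option maxHeartbeats 1000000 in
/-- An edge `x → y` of the auxiliary graph (induced by player `î`) lies on a `0`-weight
cycle if and only if `0 < a^î_x < 1` and `0 < a^î_y < 1`. -/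
theorem edge_in_zero_weight_cycle_iff
    {X I : Type*} [Fintype X] [DecidableEq X] [Fintype I] [DecidableEq I]
    (k : I → ℕ) (hk : ∀ i, 1 ≤ k i) (hsum : ∑ i, k i = Fintype.card X)
    (v : I → X → ℝ) (hv : ∀ i x, 0 ≤ v i x)
    (K : ℕ) (hK : 1 ≤ K)
    (Oenum : Fin K → I → Finset X)
    (hinj : Function.Injective Oenum)
    (hall : ∀ O : I → Finset X, IsOptimal v k O ↔ ∃ t, Oenum t = O)
    (a : I → X → ℝ)
    (ha : ∀ i x, a i x =
      ((Finset.univ.filter (fun t : Fin K => x ∈ Oenum t i)).card : ℝ) / K)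
    (ih : I) (x y : X) (hax : 0 < a ih x) (hay : a ih y < 1) :
    (∃ l : ℕ, 1 ≤ l ∧
      ∃ (z : Fin (l + 1) → X) (jj : Fin (l + 1) → I),
        z 0 = x ∧ z 1 = y ∧ jj 0 = ih ∧
        (∀ s, 0 < a (jj s) (z s)) ∧
        (∀ s, a (jj s) (z (s + 1)) < 1) ∧
        (∑ s, (v (jj s) (z s) - v (jj s) (z (s + 1)))) = 0) ↔
    (0 < a ih x ∧ a ih x < 1 ∧ 0 < a ih y ∧ a ih y < 1) := by
  classical
  constructor
  · rintro ⟨l, hl, z, jj, hz0, hz1, hj0, hpos, hlt, hzero⟩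
    have h0 := MDM.forward k hsum v hv K hK Oenum hall a ha l z jj hpos hlt hzero 0
    have hzz1 : z (0 + 1) = y := by rw [zero_add, hz1]
    rw [hj0, hz0, hzz1] at h0
    exact ⟨hax, h0.2, h0.1, hay⟩
  · rintro ⟨-, hax1, hay0, -⟩
    have hOenumOpt : ∀ t, IsOptimal v k (Oenum t) := fun t => (hall (Oenum t)).mpr ⟨t, rfl⟩
    -- allocations P, Q, R, T
    obtain ⟨tP, htP⟩ := (MDM.a_pos_iff hK Oenum a ha ih x).mp hax
    obtain ⟨tQ, htQ⟩ := (MDM.a_lt_one_iff hK Oenum a ha ih x).mp hax1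
    obtain ⟨tR, htR⟩ := (MDM.a_pos_iff hK Oenum a ha ih y).mp hay0
    obtain ⟨tT, htT⟩ := (MDM.a_lt_one_iff hK Oenum a ha ih y).mp hay
    set P := Oenum tP ; set Q := Oenum tQ ; set R := Oenum tR ; set T := Oenum tT
    -- find u ∈ Q ih \ P ih and w ∈ T ih \ R ih
    have hcards : ∀ (A B : I → Finset X), IsAllocation k A → IsAllocation k B →
        ((A ih \ B ih).card = (B ih \ A ih).card) := by
      intro A B hA hB
      have h1 := Finset.card_sdiff_add_card_inter (A ih) (B ih)
      have h2 := Finset.card_sdiff_add_card_inter (B ih) (A ih)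
      rw [Finset.inter_comm] at h2
      rw [hA.1 ih] at h1
      rw [hB.1 ih] at h2
      omega
    have hu_ex : (Q ih \ P ih).Nonempty := by
      rw [← Finset.card_pos, hcards Q P (hOenumOpt tQ).1 (hOenumOpt tP).1, Finset.card_pos]
      exact ⟨x, Finset.mem_sdiff.mpr ⟨htP, htQ⟩⟩
    obtain ⟨u, hu⟩ := hu_ex
    rw [Finset.mem_sdiff] at hu
    have hw_ex : (T ih \ R ih).Nonempty := by
      rw [← Finset.card_pos, hcards T R (hOenumOpt tT).1 (hOenumOpt tR).1, Finset.card_pos]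
      exact ⟨y, Finset.mem_sdiff.mpr ⟨htR, htT⟩⟩
    obtain ⟨w, hw⟩ := hw_ex
    rw [Finset.mem_sdiff] at hw
    -- two cycles
    obtain ⟨n, hn1, g1, jf1, hg10, hg11, hg1n, hjf10, hpos1, hlt1, hsum1⟩ :=
      MDM.exists_fcycle v hv K hK Oenum hall a ha (hOenumOpt tQ) (hOenumOpt tP)
        ih x u htP htQ hu.1 hu.2
    obtain ⟨m, hm1, g2, jf2, hg20, hg21, hg2m, hjf20, hpos2, hlt2, hsum2⟩ :=
      MDM.exists_fcycle v hv K hK Oenum hall a ha (hOenumOpt tR) (hOenumOpt tT)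
        ih w y hw.1 hw.2 htR htT
    have hn2 : 2 ≤ n := by
      by_contra hc
      have : n = 1 := by omega
      rw [this] at hg1n
      rw [hg1n] at hg11
      exact hu.2 (hg11 ▸ htP)
    have hm2 : 2 ≤ m := by
      by_contra hc
      have : m = 1 := by omega
      rw [this] at hg2m
      rw [hg2m] at hg21
      exact hw.2 (hg21 ▸ htR)
    -- assemble
    set l : ℕ := m + n - 1 with hldef
    have hl1 : 1 ≤ l := by omega
    have hL : l + 1 = m + n := by omega
    set Z : ℕ → X := fun p => if p = 0 then x else if p ≤ m then g2 p else g1 (p - m) with hZdef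
    set J : ℕ → I := fun p => if p = 0 then ih else if p < m then jf2 p
      else if p = m then ih else jf1 (p - m) with hJdef
    -- value facts
    have hZ0 : Z 0 = x := by simp [hZdef]
    have hZ1 : Z 1 = y := by
      rw [hZdef]
      simp only [if_neg (by omega : ¬ (1:ℕ) = 0), if_pos (by omega : 1 ≤ m)]
      rw [hg21]
    have hZm : Z m = w := by
      rw [hZdef]
      simp only [if_neg (by omega : ¬ m = 0), if_pos (le_refl m)]
      rw [hg2m]
    have hZm1 : Z (m + 1) = u := by
      rw [hZdef]
      simp only [if_neg (by omega : ¬ m + 1 = 0), if_neg (by omega : ¬ m + 1 ≤ m)]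
      have : m + 1 - m = 1 := by omega
      rw [this, hg11]
    have hZmid2 : ∀ p, 1 ≤ p → p ≤ m → Z p = g2 p := by
      intro p h1 h2
      rw [hZdef]
      simp only [if_neg (by omega : ¬ p = 0), if_pos h2]
    have hZmid1 : ∀ p, m < p → Z p = g1 (p - m) := by
      intro p h1
      rw [hZdef]
      simp only [if_neg (by omega : ¬ p = 0), if_neg (by omega : ¬ p ≤ m)]
    have hZtop : Z (l + 1) = x := by
      rw [hZmid1 (l + 1) (by omega)]
      have : l + 1 - m = n := by omega
      rw [this, hg1n]
    have hJ0 : J 0 = ih := by simp [hJdef]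
    have hJm : J m = ih := by
      rw [hJdef]
      simp only [if_neg (by omega : ¬ m = 0), if_neg (lt_irrefl m)]
      simp
    have hJmid2 : ∀ p, 1 ≤ p → p < m → J p = jf2 p := by
      intro p h1 h2
      rw [hJdef]
      simp only [if_neg (by omega : ¬ p = 0), if_pos h2]
    have hJmid1 : ∀ p, m < p → J p = jf1 (p - m) := by
      intro p h1
      rw [hJdef]
      simp only [if_neg (by omega : ¬ p = 0), if_neg (by omega : ¬ p < m),
        if_neg (by omega : ¬ p = m)]
    -- a-facts for w and u
    have haw : 0 < a ih w := by
      rw [MDM.a_pos_iff hK Oenum a ha]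
      exact ⟨tT, hw.1⟩
    have hau : a ih u < 1 := by
      rw [MDM.a_lt_one_iff hK Oenum a ha]
      exact ⟨tP, hu.2⟩
    -- the Fin functions
    refine ⟨l, hl1, fun s => Z s.val, fun s => J s.val, ?_, ?_, ?_, ?_, ?_, ?_⟩
    · show Z ((0 : Fin (l+1)).val) = x
      rw [Fin.val_zero, hZ0]
    · show Z ((1 : Fin (l+1)).val) = y
      have hv1 : ((1 : Fin (l+1))).val = 1 := by
        rw [Fin.val_one']
        exact Nat.mod_eq_of_lt (by omega)
      rw [hv1, hZ1]
    · show J ((0 : Fin (l+1)).val) = ih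
      rw [Fin.val_zero, hJ0]
    · -- positivity
      intro s
      show 0 < a (J s.val) (Z s.val)
      have hs : s.val < l + 1 := s.isLt
      rcases Nat.eq_zero_or_pos s.val with h0 | hp
      · rw [h0, hZ0, hJ0]; exact hax
      rcases Nat.lt_or_ge s.val m with hlt' | hge
      · rw [hZmid2 s.val hp (by omega), hJmid2 s.val hp hlt']
        exact hpos2 s.val
      rcases Nat.eq_or_lt_of_le hge with heq | hgt
      · rw [← heq, hZm, hJm]; exact haw
      · rw [hZmid1 s.val hgt, hJmid1 s.val hgt]
        exact hpos1 (s.val - m)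
    · -- less than one
      intro s
      show a (J s.val) (Z ((s + 1).val)) < 1
      have hs : s.val < l + 1 := s.isLt
      have hwrap : Z ((s + 1).val) = Z (s.val + 1) := by
        have hv' : (s + 1).val = (s.val + 1) % (l + 1) := by
          rw [Fin.add_def, Fin.val_one']
          simp
        rcases Nat.lt_or_ge s.val l with h | h
        · rw [hv', Nat.mod_eq_of_lt (by omega)]
        · have hsl : s.val = l := by omega
          rw [hv', hsl]
          have : (l + 1) % (l + 1) = 0 := Nat.mod_self _
          rw [this, hZ0, hZtop]
      rw [hwrap]
      rcases Nat.eq_zero_or_pos s.val with h0 | hp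
      · rw [h0, hJ0, zero_add, hZ1]; exact hay
      rcases Nat.lt_or_ge s.val m with hlt' | hge
      · rw [hZmid2 (s.val + 1) (by omega) (by omega), hJmid2 s.val hp hlt']
        exact hlt2 s.val
      rcases Nat.eq_or_lt_of_le hge with heq | hgt
      · have hsm : s.val = m := heq.symm
        rw [hsm, hJm, hZm1]
        exact hau
      · rw [hZmid1 (s.val + 1) (by omega), hJmid1 s.val hgt]
        have : s.val + 1 - m = (s.val - m) + 1 := by omega
        rw [this]
        exact hlt1 (s.val - m)
    · -- the sum
      have hwrap : ∀ s : Fin (l + 1), Z ((s + 1).val) = Z (s.val + 1) := by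
        intro s
        have hv' : (s + 1).val = (s.val + 1) % (l + 1) := by
          rw [Fin.add_def, Fin.val_one']
          simp
        rcases Nat.lt_or_ge s.val l with h | h
        · rw [hv', Nat.mod_eq_of_lt (by omega)]
        · have hsl : s.val = l := by omega
          rw [hv', hsl]
          have : (l + 1) % (l + 1) = 0 := Nat.mod_self _
          rw [this, hZ0, hZtop]
      have hstep : ∀ s : Fin (l + 1),
          (v (J s.val) (Z s.val) - v (J s.val) (Z ((s + 1).val)))
          = (v (J s.val) (Z s.val) - v (J s.val) (Z (s.val + 1))) := by
        intro s; rw [hwrap s]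
      rw [Finset.sum_congr rfl fun s _ => hstep s]
      rw [Fin.sum_univ_eq_sum_range (fun p => v (J p) (Z p) - v (J p) (Z (p + 1))) (l + 1)]
      rw [hL, Finset.sum_range_add]
      -- part 2 : over range m
      have hpart2 : ∑ p ∈ Finset.range m, (v (J p) (Z p) - v (J p) (Z (p + 1)))
          = (v ih x - v ih y) - (v ih w - v ih y) := by
        have hdiff : ∑ p ∈ Finset.range m,
            ((v (J p) (Z p) - v (J p) (Z (p + 1)))
              - (v (jf2 p) (g2 p) - v (jf2 p) (g2 (p + 1))))
            = (v ih x - v ih y) - (v ih w - v ih y) := by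
          rw [Finset.sum_eq_single 0]
          · rw [hZ0, hJ0, zero_add, hZ1, hg20, hg21, hjf20]
          · intro p hp hne
            have hp' : p < m := Finset.mem_range.mp hp
            have hp1 : 1 ≤ p := by omega
            rw [hJmid2 p hp1 hp', hZmid2 p hp1 (by omega)]
            rcases Nat.lt_or_ge (p + 1) m with h | h
            · rw [hZmid2 (p + 1) (by omega) (by omega)]
              ring
            · have : p + 1 = m := by omega
              rw [this, hZm, ← hg2m, ← this]
              ring
          · intro h
            exact absurd (Finset.mem_range.mpr (by omega : (0:ℕ) < m)) h
        rw [Finset.sum_sub_distrib, hsum2] at hdiff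
        linarith
      -- part 1 : over range n shifted by m
      have hpart1 : ∑ p ∈ Finset.range n, (v (J (m + p)) (Z (m + p)) - v (J (m + p)) (Z (m + p + 1)))
          = (v ih w - v ih u) - (v ih x - v ih u) := by
        have hdiff : ∑ p ∈ Finset.range n,
            ((v (J (m + p)) (Z (m + p)) - v (J (m + p)) (Z (m + p + 1)))
              - (v (jf1 p) (g1 p) - v (jf1 p) (g1 (p + 1))))
            = (v ih w - v ih u) - (v ih x - v ih u) := by
          rw [Finset.sum_eq_single 0]
          · rw [Nat.add_zero, hZm, hJm, hZm1, hg10, hg11, hjf10]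
          · intro p hp hne
            have hp' : p < n := Finset.mem_range.mp hp
            have hp1 : 1 ≤ p := by omega
            rw [hJmid1 (m + p) (by omega), hZmid1 (m + p) (by omega),
              hZmid1 (m + p + 1) (by omega)]
            have e1 : m + p - m = p := by omega
            have e2 : m + p + 1 - m = p + 1 := by omega
            rw [e1, e2]
            ring
          · intro h
            exact absurd (Finset.mem_range.mpr (by omega : (0:ℕ) < n)) h
        rw [Finset.sum_sub_distrib, hsum1] at hdiff
        linarith
      rw [hpart2, hpart1]
      ring
end

section
/- Every multi-demand market with strictly positive item valuations admits rough prices: there exists a price vector p ∈ ℝ^X with p_x > 0 for all x such that for every player i: (1) for all x ∈ R_i and y ∉ R_i, v_i(x) − p_x > v_i(y) − p_y; (2) for all x, y ∈ K_i ∖ R_i, v_i(x) − p_x = v_i(y) − p_y; and (3) for all x ∈ K_i and y ∉ K_i, v_i(x) − p_x > v_i(y) − p_y. -/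
open Finset

/-- An item `x` is legal to player `i`: some optimal allocation assigns `x` to `i`. -/
def LegalItem {X I : Type*} [DecidableEq X] [Fintype I]
    (v : I → X → ℝ) (k : I → ℕ) (i : I) (x : X) : Prop :=
  ∃ O : I → Finset X, IsOptimal v k O ∧ x ∈ O i

/-- An item `x` belongs to `R_i`: it is assigned to `i` in every optimal allocation. -/
def AlwaysItem {X I : Type*} [DecidableEq X] [Fintype I]
    (v : I → X → ℝ) (k : I → ℕ) (i : I) (x : X) : Prop :=
  ∀ O : I → Finset X, IsOptimal v k O → x ∈ O i


namespace RoughAux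
set_option linter.unusedSectionVars false
set_option maxHeartbeats 1000000



lemma bundleValue_eq_sum {X : Type*} [DecidableEq X] (k : ℕ) (v : X → ℝ)
    (hv : ∀ x, 0 ≤ v x) (S : Finset X) (h : S.card ≤ k) :
    bundleValue k v S = ∑ x ∈ S, v x := by
  apply le_antisymm
  · apply Finset.max'_le
    intro b hb
    simp only [mem_image, mem_filter, mem_powerset] at hb
    obtain ⟨T, ⟨hTS, -⟩, rfl⟩ := hb
    exact Finset.sum_le_sum_of_subset_of_nonneg hTS (fun x _ _ => hv x)
  · apply Finset.le_max'
    simp only [mem_image, mem_filter, mem_powerset]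
    exact ⟨S, ⟨Finset.Subset.refl S, h⟩, rfl⟩

variable {X I : Type*} [Fintype X] [DecidableEq X] [Fintype I] [DecidableEq I]

/-- fiber of an owner function -/
def fib (a : X → I) (i : I) : Finset X := Finset.univ.filter (fun x => a x = i)

@[simp] lemma mem_fib {a : X → I} {i x} : x ∈ fib a i ↔ a x = i := by
  simp [fib]

def IsAlloc (k : I → ℕ) (a : X → I) : Prop := ∀ i, (fib a i).card = k i

noncomputable def val (v : I → X → ℝ) (a : X → I) : ℝ := ∑ x, v (a x) x

def OptA (v : I → X → ℝ) (k : I → ℕ) (a : X → I) : Prop :=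
  IsAlloc k a ∧ ∀ b, IsAlloc k b → val v b ≤ val v a

variable {v : I → X → ℝ} {k : I → ℕ}

lemma isAllocation_fib {a : X → I} (ha : IsAlloc k a) : IsAllocation k (fib a) :=
  ⟨ha, fun x => ⟨a x, by simp, fun i h => by simpa using (mem_fib.1 h).symm⟩⟩

lemma socialWelfare_fib (hv : ∀ i x, 0 < v i x) {a : X → I} (ha : IsAlloc k a) :
    socialWelfare v k (fib a) = val v a := by
  unfold socialWelfare val
  rw [← Finset.sum_fiberwise Finset.univ a (fun x => v (a x) x)]
  refine Finset.sum_congr rfl (fun i _ => ?_)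
  rw [bundleValue_eq_sum _ _ (fun x => (hv i x).le) _ (le_of_eq (ha i))]
  refine Finset.sum_congr rfl (fun x hx => ?_)
  rw [Finset.mem_filter] at hx
  rw [hx.2]

lemma exists_owner {O : I → Finset X} (hO : IsAllocation k O) :
    ∃ a : X → I, IsAlloc k a ∧ ∀ i, O i = fib a i := by
  choose a ha hu using hO.2
  refine ⟨a, ?_, ?_⟩
  · intro i
    have : O i = fib a i := by
      ext x
      simp only [mem_fib]
      constructor
      · intro hx; exact (hu x i hx).symm ▸ rfl
      · intro hx; exact hx ▸ ha x
    rw [← this]; exact hO.1 i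
  · intro i
    ext x
    simp only [mem_fib]
    constructor
    · intro hx; exact (hu x i hx).symm ▸ rfl
    · intro hx; exact hx ▸ ha x

lemma isOptimal_fib (hv : ∀ i x, 0 < v i x) {a : X → I} (ha : OptA v k a) :
    IsOptimal v k (fib a) := by
  refine ⟨isAllocation_fib ha.1, fun O' hO' => ?_⟩
  obtain ⟨b, hb, hOb⟩ := exists_owner hO'
  have : socialWelfare v k O' = val v b := by
    rw [show O' = fib b from funext hOb, socialWelfare_fib hv hb]
  rw [this, socialWelfare_fib hv ha.1]
  exact ha.2 b hb

lemma optA_of_isOptimal (hv : ∀ i x, 0 < v i x) {O : I → Finset X} (hO : IsOptimal v k O)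
    {a : X → I} (ha : IsAlloc k a) (hfib : ∀ i, O i = fib a i) : OptA v k a := by
  refine ⟨ha, fun b hb => ?_⟩
  have h1 := hO.2 (fib b) (isAllocation_fib hb)
  rw [show O = fib a from funext hfib] at h1
  rw [socialWelfare_fib hv hb, socialWelfare_fib hv ha] at h1
  exact h1

lemma legal_iff (hv : ∀ i x, 0 < v i x) {i : I} {x : X} :
    LegalItem v k i x ↔ ∃ a, OptA v k a ∧ a x = i := by
  constructor
  · rintro ⟨O, hO, hx⟩
    obtain ⟨a, ha, hfib⟩ := exists_owner hO.1
    exact ⟨a, optA_of_isOptimal hv hO ha hfib, by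
      have := (hfib i) ▸ hx; exact mem_fib.1 this⟩
  · rintro ⟨a, ha, rfl⟩
    exact ⟨fib a, isOptimal_fib hv ha, by simp⟩

lemma exists_optA (hv : ∀ i x, 0 < v i x) (hex : ∃ O : I → Finset X, IsAllocation k O) :
    ∃ a, OptA v k a := by
  classical
  obtain ⟨O, hO⟩ := hex
  obtain ⟨a0, ha0, -⟩ := exists_owner hO
  have hne : (Finset.univ.filter (fun a : X → I => IsAlloc k a)).Nonempty :=
    ⟨a0, by simp [ha0]⟩
  obtain ⟨a, ha, hmax⟩ := Finset.exists_max_image _ (val v) hne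
  simp only [Finset.mem_filter, Finset.mem_univ, true_and] at ha
  exact ⟨a, ha, fun b hb => hmax b (by simp [hb])⟩


lemma cycle_apply (y : ℕ → X) (m : ℕ) (hy : ∀ s < m, ∀ t < m, y s = y t → s = t)
    (t : ℕ) (ht : t < m) :
    ((List.range m).map y).formPerm (y t) = y ((t + 1) % m) := by
  set l := (List.range m).map y with hl
  have hnd : l.Nodup :=
    List.Nodup.map_on (fun s hs t' ht' h => hy s (List.mem_range.1 hs) t' (List.mem_range.1 ht') h)
      List.nodup_range
  have h1 : t < l.length := by simp [hl]; omega
  have hget : l[t]'h1 = y t := by simp [hl]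
  rw [← hget, List.formPerm_apply_getElem _ hnd t h1]
  simp [hl]

lemma sum_cycle (y : ℕ → X) (m : ℕ) (hy : ∀ s < m, ∀ t < m, y s = y t → s = t)
    (G : X → X → ℝ) (hG : ∀ x, G x x = 0) :
    ∑ x, G x (((List.range m).map y).formPerm x)
      = ∑ t ∈ Finset.range m, G (y t) (y ((t + 1) % m)) := by
  set l := (List.range m).map y with hl
  have hnd : l.Nodup :=
    List.Nodup.map_on (fun s hs t' ht' h => hy s (List.mem_range.1 hs) t' (List.mem_range.1 ht') h)
      List.nodup_range
  have step1 : ∑ x, G x (l.formPerm x) = ∑ x ∈ l.toFinset, G x (l.formPerm x) := by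
    refine (Finset.sum_subset (Finset.subset_univ _) (fun x _ hx => ?_)).symm
    rw [List.formPerm_apply_of_notMem (fun h => hx (List.mem_toFinset.2 h)), hG]
  rw [step1, List.sum_toFinset _ hnd]
  have : l.map (fun x => G x (l.formPerm x))
      = (List.range m).map (fun t => G (y t) (y ((t+1) % m))) := by
    rw [hl, List.map_map]
    refine List.map_congr_left (fun t ht => ?_)
    have htm := List.mem_range.1 ht
    simp only [Function.comp_apply]
    rw [← hl, cycle_apply y m hy t htm]
  rw [this]
  rfl

noncomputable def Phi (v : I → X → ℝ) (a : X → I) (π : Equiv.Perm X) : ℝ :=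
  ∑ x, (v (a (π x)) x - v (a x) x)

variable {v : I → X → ℝ} {k : I → ℕ} {a : X → I}

lemma isAlloc_comp (ha : IsAlloc k a) (π : Equiv.Perm X) :
    IsAlloc k (fun x => a (π x)) := by
  intro i
  have : fib (fun x => a (π x)) i = (fib a i).image π.symm := by
    ext x
    simp only [mem_fib, Finset.mem_image]
    constructor
    · intro h; exact ⟨π x, h, by simp⟩
    · rintro ⟨z, hz, rfl⟩; simpa using hz
  rw [this, Finset.card_image_of_injective _ π.symm.injective]
  exact ha i

lemma val_comp (π : Equiv.Perm X) : val v (fun x => a (π x)) = val v a + Phi v a π := by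
  simp [val, Phi, Finset.sum_sub_distrib]

lemma phi_nonpos (ha : OptA v k a) (π : Equiv.Perm X) : Phi v a π ≤ 0 := by
  have := ha.2 _ (isAlloc_comp ha.1 π)
  rw [val_comp] at this; linarith

lemma optA_comp (ha : OptA v k a) (π : Equiv.Perm X) (h : Phi v a π = 0) :
    OptA v k (fun x => a (π x)) := by
  refine ⟨isAlloc_comp ha.1 π, fun b hb => ?_⟩
  rw [val_comp, h, add_zero]
  exact ha.2 b hb

lemma exists_glue {b : X → I} (ha : IsAlloc k a) (hb : IsAlloc k b) :
    ∃ π : Equiv.Perm X, ∀ x, a (π x) = b x := by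
  have hcard : ∀ i, Fintype.card {x // b x = i} = Fintype.card {x // a x = i} := by
    intro i
    rw [Fintype.card_subtype, Fintype.card_subtype]
    have h1 : ∀ c : X → I, (Finset.filter (fun x => c x = i) Finset.univ).card
        = (fib c i).card := fun c => rfl
    rw [h1 a, h1 b, ha i, hb i]
  let e : ∀ i, {x // b x = i} ≃ {x // a x = i} := fun i => Fintype.equivOfCardEq (hcard i)
  refine ⟨(Equiv.sigmaFiberEquiv b).symm.trans
    ((Equiv.sigmaCongrRight e).trans (Equiv.sigmaFiberEquiv a)), fun x => ?_⟩
  simp only [Equiv.trans_apply]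
  have h0 : (Equiv.sigmaFiberEquiv b).symm x = ⟨b x, ⟨x, rfl⟩⟩ := rfl
  rw [h0]
  have h1 : (Equiv.sigmaCongrRight e) ⟨b x, ⟨x, rfl⟩⟩ = ⟨b x, e (b x) ⟨x, rfl⟩⟩ := rfl
  rw [h1]
  exact (e (b x) ⟨x, rfl⟩).property



/-- Key orbit lemma: if `Phi v a π = 0` and every permutation has nonpositive `Phi`
(optimality), then each orbit of `π` contributes zero. -/
lemma orbit_sum_zero (hopt : ∀ σ : Equiv.Perm X, Phi v a σ ≤ 0) (π : Equiv.Perm X)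
    (hΦ : Phi v a π = 0) (x : X) :
    ∑ t ∈ Finset.range (Function.minimalPeriod ⇑π x),
      (v (a (π ((⇑π)^[t] x))) ((⇑π)^[t] x) - v (a ((⇑π)^[t] x)) ((⇑π)^[t] x)) = 0 := by
  classical
  set m := Function.minimalPeriod ⇑π x with hmdef
  have hper : x ∈ Function.periodicPts ⇑π := by
    refine ⟨orderOf π, orderOf_pos π, ?_⟩
    show (⇑π)^[orderOf π] x = x
    rw [Equiv.Perm.iterate_eq_pow, pow_orderOf_eq_one]
    rfl
  have hm : 0 < m := Function.minimalPeriod_pos_of_mem_periodicPts hper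
  have hmx : (⇑π)^[m] x = x := Function.iterate_minimalPeriod
  set y : ℕ → X := fun t => (⇑π)^[t] x with hy
  have hyinj : ∀ s < m, ∀ t < m, y s = y t → s = t := by
    intro s hs t ht h
    exact Function.iterate_injOn_Iio_minimalPeriod (Set.mem_Iio.2 hs) (Set.mem_Iio.2 ht) h
  set l := (List.range m).map y with hl
  set π' := l.formPerm with hπ'
  have hmem : ∀ z, z ∈ l ↔ ∃ t < m, y t = z := by
    intro z; simp [hl, List.mem_map, List.mem_range]
  have hagree : ∀ z ∈ l, π' z = π z := by
    intro z hz
    obtain ⟨t, ht, rfl⟩ := (hmem z).1 hz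
    rw [hπ', cycle_apply y m hyinj t ht]
    have : π (y t) = y (t+1) := by
      rw [hy]; simp [Function.iterate_succ_apply']
    rw [this]
    rcases Nat.lt_or_ge (t+1) m with h | h
    · rw [Nat.mod_eq_of_lt h]
    · have : t + 1 = m := by omega
      rw [this, Nat.mod_self, hy]
      simp [hmx]
  -- orbit sum S equals Phi of π'
  have hS : Phi v a π' = ∑ t ∈ Finset.range m,
      (v (a (π ((⇑π)^[t] x))) ((⇑π)^[t] x) - v (a ((⇑π)^[t] x)) ((⇑π)^[t] x)) := by
    rw [Phi, sum_cycle y m hyinj (fun z w => v (a w) z - v (a z) z) (fun z => by ring)]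
    refine Finset.sum_congr rfl (fun t ht => ?_)
    have htm := Finset.mem_range.1 ht
    have h1 : y ((t+1) % m) = π (y t) := by
      have : π (y t) = y (t+1) := by rw [hy]; simp [Function.iterate_succ_apply']
      rw [this]
      rcases Nat.lt_or_ge (t+1) m with h | h
      · rw [Nat.mod_eq_of_lt h]
      · have h2 : t + 1 = m := by omega
        rw [h2, Nat.mod_self, hy]; simp [hmx]
    rw [h1]
  -- complement permutation
  set π'' := π'.symm.trans π with hπ''
  have hfixl : ∀ z ∈ l, π'' z = z := by
    intro z hz
    have hw : π'.symm z ∈ l := by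
      by_contra hnot
      have : π' (π'.symm z) = π'.symm z := List.formPerm_apply_of_notMem hnot
      rw [Equiv.apply_symm_apply] at this
      exact hnot (this ▸ hz)
    have : π (π'.symm z) = π' (π'.symm z) := (hagree _ hw).symm
    rw [hπ'', Equiv.trans_apply, this, Equiv.apply_symm_apply]
  have hoffl : ∀ z, z ∉ l → π'' z = π z := by
    intro z hz
    have h1 : π' z = z := List.formPerm_apply_of_notMem hz
    have h2 : π'.symm z = z := by
      conv_lhs => rw [← h1]
      exact π'.symm_apply_apply z
    rw [hπ'', Equiv.trans_apply, h2]
  have hsplit : Phi v a π = Phi v a π'' + Phi v a π' := by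
    rw [Phi, Phi, Phi, ← Finset.sum_add_distrib]
    refine Finset.sum_congr rfl (fun z _ => ?_)
    by_cases hz : z ∈ l
    · rw [hfixl z hz, hagree z hz]; ring
    · rw [hoffl z hz, List.formPerm_apply_of_notMem hz]; ring
  have h1 := hopt π'
  have h2 := hopt π''
  have : Phi v a π' = 0 := by rw [hsplit] at hΦ; linarith
  rw [← hS, this]


/-- weight of the walk `g 0, g 1, ..., g m`. -/
noncomputable def cwSum (w : I → I → ℝ) (g : ℕ → I) (m : ℕ) : ℝ :=
  ∑ t ∈ Finset.range m, w (g t) (g (t + 1))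

/-- all simple closed walks are nonnegative -/
def SCnn (w : I → I → ℝ) : Prop :=
  ∀ (g : ℕ → I) (m : ℕ), g m = g 0 → (∀ s < m, ∀ t < m, g s = g t → s = t) →
    0 ≤ cwSum w g m

lemma cwSum_congr {w : I → I → ℝ} {g g' : ℕ → I} {m : ℕ}
    (h : ∀ t ≤ m, g t = g' t) : cwSum w g m = cwSum w g' m := by
  refine Finset.sum_congr rfl (fun t ht => ?_)
  have := Finset.mem_range.1 ht
  rw [h t (by omega), h (t+1) (by omega)]

/-- splitting a closed walk at a repeated vertex -/
lemma cwSum_split (w : I → I → ℝ) (g : ℕ → I) (m s r : ℕ) (hs : s < r) (hr : r ≤ m)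
    (hrep : g s = g r) :
    cwSum w g m = cwSum w (fun t => if t ≤ s then g t else g (t + (r - s))) (m - (r - s))
      + cwSum w (fun t => g (t + s)) (r - s) := by
  have hinner : cwSum w (fun t => g (t + s)) (r - s) = ∑ t ∈ Finset.Ico s r, w (g t) (g (t+1)) := by
    rw [Finset.sum_Ico_eq_sum_range, cwSum]
    refine Finset.sum_congr rfl (fun t _ => ?_)
    rw [show t + s = s + t by omega, show t + 1 + s = s + t + 1 by omega]
  have houter : cwSum w (fun t => if t ≤ s then g t else g (t + (r - s))) (m - (r - s))
      = ∑ t ∈ Finset.Ico 0 s, w (g t) (g (t+1)) + ∑ t ∈ Finset.Ico r m, w (g t) (g (t+1)) := by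
    rw [cwSum, Finset.range_eq_Ico, ← Finset.sum_Ico_consecutive _ (by omega : 0 ≤ s)
      (by omega : s ≤ m - (r - s))]
    congr 1
    · refine Finset.sum_congr rfl (fun t ht => ?_)
      have ht' := Finset.mem_Ico.1 ht
      rw [if_pos (by omega : t ≤ s), if_pos (by omega : t + 1 ≤ s)]
    · rw [Finset.sum_Ico_eq_sum_range]
      rw [show m - (r - s) - s = m - r by omega]
      rw [(Finset.sum_Ico_eq_sum_range (fun t => w (g t) (g (t+1))) r m)]
      refine Finset.sum_congr rfl (fun t _ => ?_)
      have e1 : ¬ (s + t + 1 ≤ s) := by omega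
      rcases Nat.eq_zero_or_pos t with rfl | htpos
      · rw [if_pos (by omega : s + 0 ≤ s)]
        simp only [e1, if_false]
        rw [show s + 0 + 1 + (r - s) = r + 0 + 1 by omega, show s + 0 = s by omega,
          show r + 0 = r by omega, hrep]
      · rw [if_neg (by omega : ¬ (s + t ≤ s))]
        simp only [e1, if_false]
        rw [show s + t + (r - s) = r + t by omega, show s + t + 1 + (r - s) = r + t + 1 by omega]
  rw [hinner, houter, cwSum, Finset.range_eq_Ico,
    ← Finset.sum_Ico_consecutive _ (by omega : 0 ≤ s) (by omega : s ≤ m),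
    ← Finset.sum_Ico_consecutive _ (by omega : s ≤ r) (by omega : r ≤ m)]
  ring

lemma not_injOn_exists {g : ℕ → I} {m : ℕ}
    (h : ¬ (∀ s < m, ∀ t < m, g s = g t → s = t)) :
    ∃ s r, s < r ∧ r < m ∧ g s = g r := by
  push_neg at h
  obtain ⟨s, hs, t, ht, heq, hne⟩ := h
  rcases Nat.lt_or_ge s t with h' | h'
  · exact ⟨s, t, h', ht, heq⟩
  · exact ⟨t, s, by omega, hs, heq.symm⟩

lemma cw_nonneg {w : I → I → ℝ} (hSC : SCnn w) :
    ∀ m (g : ℕ → I), g m = g 0 → 0 ≤ cwSum w g m := by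
  intro m
  induction m using Nat.strong_induction_on with
  | _ m IH =>
    intro g hclosed
    by_cases hinj : ∀ s < m, ∀ t < m, g s = g t → s = t
    · exact hSC g m hclosed hinj
    · obtain ⟨s, r, hsr, hrm, hrep⟩ := not_injOn_exists hinj
      rw [cwSum_split w g m s r hsr (by omega) hrep]
      have h1 : 0 ≤ cwSum w (fun t => g (t + s)) (r - s) := by
        apply IH (r - s) (by omega)
        show g (r - s + s) = g (0 + s)
        rw [show r - s + s = r by omega, show 0 + s = s by omega, ← hrep]
      have h2 : 0 ≤ cwSum w (fun t => if t ≤ s then g t else g (t + (r - s))) (m - (r - s)) := by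
        apply IH (m - (r - s)) (by omega)
        show (if m - (r - s) ≤ s then g (m - (r-s)) else g (m - (r - s) + (r - s)))
          = (if 0 ≤ s then g 0 else g (0 + (r - s)))
        rw [if_neg (by omega : ¬ (m - (r - s) ≤ s)), if_pos (Nat.zero_le s),
          show m - (r - s) + (r - s) = m by omega, hclosed]
      linarith

lemma exists_simple_zero {w : I → I → ℝ} (hSC : SCnn w) :
    ∀ m (g : ℕ → I), g m = g 0 → 1 ≤ m → cwSum w g m ≤ 0 →
    ∃ (g' : ℕ → I) (m' : ℕ), 1 ≤ m' ∧ g' m' = g' 0 ∧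
      (∀ s < m', ∀ t < m', g' s = g' t → s = t) ∧ cwSum w g' m' = 0 ∧
      g' 0 = g 0 ∧ g' 1 = g 1 := by
  intro m
  induction m using Nat.strong_induction_on with
  | _ m IH =>
    intro g hclosed hm hsum
    by_cases hinj : ∀ s < m, ∀ t < m, g s = g t → s = t
    · exact ⟨g, m, hm, hclosed, hinj, le_antisymm hsum (hSC g m hclosed hinj), rfl, rfl⟩
    · obtain ⟨s, r, hsr, hrm, hrep⟩ := not_injOn_exists hinj
      have hsplit := cwSum_split w g m s r hsr (by omega) hrep
      have hinpos : 0 ≤ cwSum w (fun t => g (t + s)) (r - s) := by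
        apply cw_nonneg hSC
        show g (r - s + s) = g (0 + s)
        rw [show r - s + s = r by omega, show 0 + s = s by omega, ← hrep]
      have houtpos : 0 ≤ cwSum w (fun t => if t ≤ s then g t else g (t + (r - s))) (m - (r - s)) := by
        apply cw_nonneg hSC
        show (if m - (r - s) ≤ s then g (m - (r-s)) else g (m - (r - s) + (r - s)))
          = (if 0 ≤ s then g 0 else g (0 + (r - s)))
        rw [if_neg (by omega : ¬ (m - (r - s) ≤ s)), if_pos (Nat.zero_le s),
          show m - (r - s) + (r - s) = m by omega, hclosed]
      rcases Nat.eq_zero_or_pos s with rfl | hspos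
      · -- recurse into the inner walk, which starts at g 0
        have hgeq : (fun t => g (t + 0)) = g := by funext t; rw [Nat.add_zero]
        rw [hgeq, Nat.sub_zero] at hsplit hinpos
        rw [Nat.sub_zero] at houtpos
        have hin : cwSum w g r ≤ 0 := by
          rw [hsplit] at hsum; linarith
        exact IH r (by omega) g hrep.symm (by omega) hin
      · -- recurse into the outer walk
        have hout : cwSum w (fun t => if t ≤ s then g t else g (t + (r - s))) (m - (r - s)) ≤ 0 := by
          rw [hsplit] at hsum; linarith
        obtain ⟨g', m', h1, h2, h3, h4, h5, h6⟩ := IH (m - (r - s)) (by omega) _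
          (by
            have hms : ¬ (m - (r - s) ≤ s) := by omega
            simp only [hms, if_false, if_pos (Nat.zero_le s)]
            rw [show m - (r - s) + (r - s) = m by omega, hclosed])
          (by omega) hout
        rw [if_pos (Nat.zero_le s)] at h5
        rw [if_pos (by omega : (1:ℕ) ≤ s)] at h6
        exact ⟨g', m', h1, h2, h3, h4, h5, h6⟩
      
section potential
variable [Fintype I] [DecidableEq I] (w : I → I → ℝ)

noncomputable def pad (h : Fin (Fintype.card I + 1) → I) : ℕ → I :=
  fun t => h ⟨min t (Fintype.card I), by omega⟩

noncomputable def pot (w : I → I → ℝ) (j : I) : ℝ :=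
  ((Finset.univ : Finset (Fin (Fintype.card I + 1) → I)).filter
    (fun h => h (Fin.last (Fintype.card I)) = j)).inf'
    ⟨fun _ => j, by simp⟩ (fun h => cwSum w (pad h) (Fintype.card I))

lemma pot_le (g : ℕ → I) : pot w (g (Fintype.card I)) ≤ cwSum w g (Fintype.card I) := by
  set N := Fintype.card I
  have hmem : (fun s : Fin (N+1) => g s.val) ∈
      (Finset.univ : Finset (Fin (N + 1) → I)).filter
        (fun h => h (Fin.last N) = g N) := by
    simp [Fin.last]
  have h1 := Finset.inf'_le (b := fun s : Fin (N+1) => g s.val)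
    (f := fun h => cwSum w (pad h) N) hmem
  have h2 : cwSum w (pad (fun s : Fin (N+1) => g s.val)) N = cwSum w g N := by
    apply cwSum_congr
    intro t ht
    simp only [pad]
    congr 1
    omega
  rw [← h2]
  exact h1

lemma pot_attained (j : I) : ∃ g : ℕ → I, g (Fintype.card I) = j ∧
    cwSum w g (Fintype.card I) = pot w j := by
  set N := Fintype.card I
  obtain ⟨h, hmem, heq⟩ := Finset.exists_mem_eq_inf'
    (⟨fun _ => j, by simp⟩ : ((Finset.univ : Finset (Fin (N + 1) → I)).filter
      (fun h => h (Fin.last N) = j)).Nonempty) (fun h => cwSum w (pad h) N)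
  simp only [Finset.mem_filter] at hmem
  refine ⟨pad h, ?_, heq.symm⟩
  simp only [pad]
  rw [show (⟨min N N, by omega⟩ : Fin (N+1)) = Fin.last N by simp [Fin.last], hmem.2]

lemma pot_potential (hdiag : ∀ i, w i i = 0) (hSC : SCnn w) (i j : I) :
    pot w j - pot w i ≤ w i j := by
  set N := Fintype.card I with hN
  obtain ⟨g, hgN, hgval⟩ := pot_attained w i
  set G : ℕ → I := fun t => if t ≤ N then g t else j with hG
  have hGN : G N = i := by simp [hG, hgN]; exact hgN
  have hGN1 : G (N+1) = j := by simp [hG]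
  have hGsum : cwSum w G (N+1) = cwSum w g N + w i j := by
    rw [cwSum, Finset.sum_range_succ, ← cwSum]
    rw [hGN, hGN1]
    congr 1
    apply cwSum_congr
    intro t ht
    simp only [hG]
    rw [if_pos ht]
  -- pigeonhole
  have hpig : ∃ s r, s < r ∧ r ≤ N ∧ G s = G r := by
    have hcard : (Finset.univ : Finset I).card < (Finset.range (N+1)).card := by
      simp [hN]
    obtain ⟨s, hs, r, hr, hne, heq⟩ :=
      Finset.exists_ne_map_eq_of_card_lt_of_maps_to hcard (fun t _ => Finset.mem_univ (G t))
    rw [Finset.mem_range] at hs hr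
    rcases Nat.lt_or_ge s r with h' | h'
    · exact ⟨s, r, h', by omega, heq⟩
    · exact ⟨r, s, by omega, by omega, heq.symm⟩
  obtain ⟨s, r, hsr, hrN, hrep⟩ := hpig
  have hsplit := cwSum_split w G (N+1) s r hsr (by omega) hrep
  have hinpos : 0 ≤ cwSum w (fun t => G (t + s)) (r - s) := by
    apply cw_nonneg hSC
    show G (r - s + s) = G (0 + s)
    rw [show r - s + s = r by omega, show 0 + s = s by omega, ← hrep]
  set m2 := N + 1 - (r - s) with hm2
  set Gout : ℕ → I := fun t => if t ≤ s then G t else G (t + (r - s)) with hGout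
  have hm2N : m2 ≤ N := by omega
  have hm2pos : 1 ≤ m2 := by omega
  have hGoutm2 : Gout m2 = j := by
    simp only [hGout]
    rw [if_neg (by omega : ¬ (m2 ≤ s)), show m2 + (r - s) = N + 1 by omega, hGN1]
  -- pad Gout to a walk of length exactly N
  set G2 : ℕ → I := fun t => if t ≤ N - m2 then Gout 0 else Gout (t - (N - m2)) with hG2
  have hG2N : G2 N = j := by
    simp only [hG2]
    rw [if_neg (by omega : ¬ (N ≤ N - m2)), show N - (N - m2) = m2 by omega, hGoutm2]
  have hG2sum : cwSum w G2 N = cwSum w Gout m2 := by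
    rw [cwSum, Finset.range_eq_Ico,
      ← Finset.sum_Ico_consecutive _ (by omega : 0 ≤ N - m2) (by omega : N - m2 ≤ N)]
    have hz : ∑ t ∈ Finset.Ico 0 (N - m2), w (G2 t) (G2 (t+1)) = 0 := by
      apply Finset.sum_eq_zero
      intro t ht
      have ht' := Finset.mem_Ico.1 ht
      simp only [hG2]
      rw [if_pos (by omega : t ≤ N - m2), if_pos (by omega : t + 1 ≤ N - m2), hdiag]
    rw [hz, zero_add, Finset.sum_Ico_eq_sum_range, show N - (N - m2) = m2 by omega, cwSum]
    refine Finset.sum_congr rfl (fun t ht => ?_)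
    have ht' := Finset.mem_range.1 ht
    simp only [hG2]
    rcases Nat.eq_zero_or_pos t with rfl | htpos
    · rw [if_pos (by omega : N - m2 + 0 ≤ N - m2),
        if_neg (by omega : ¬ (N - m2 + 0 + 1 ≤ N - m2)),
        show N - m2 + 0 + 1 - (N - m2) = 0 + 1 by omega]
    · rw [if_neg (by omega : ¬ (N - m2 + t ≤ N - m2)),
        if_neg (by omega : ¬ (N - m2 + t + 1 ≤ N - m2)),
        show N - m2 + t - (N - m2) = t by omega,
        show N - m2 + t + 1 - (N - m2) = t + 1 by omega]
  have hfinal : pot w j ≤ cwSum w Gout m2 := by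
    have := pot_le w G2
    rw [hG2N] at this
    rw [← hG2sum]
    exact this
  have : cwSum w Gout m2 ≤ cwSum w G (N+1) := by rw [hsplit]; linarith
  rw [hGsum, hgval] at this
  linarith [hfinal]

end potential
variable (v : I → X → ℝ) (a : X → I)

/-- exchange weight between players -/
noncomputable def Lw : I → I → ℝ := fun i j =>
  if hne : (fib a i).Nonempty then
    (if i = j then 0 else (fib a i).inf' hne (fun x => v i x - v j x)) else 0

variable {k : I → ℕ}

@[simp] lemma Lw_diag (i : I) : Lw v a i i = 0 := by
  unfold Lw
  split <;> simp

lemma fib_nonempty (ha : IsAlloc k a) (hk : ∀ i, 1 ≤ k i) (i : I) : (fib a i).Nonempty := by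
  rw [← Finset.card_pos, ha i]; exact hk i

lemma Lw_le {i j : I} (hij : i ≠ j) {x : X} (hx : a x = i) :
    Lw v a i j ≤ v i x - v j x := by
  have hne : (fib a i).Nonempty := ⟨x, mem_fib.2 hx⟩
  unfold Lw
  rw [dif_pos hne, if_neg hij]
  exact Finset.inf'_le _ (mem_fib.2 hx)

lemma Lw_exists (ha : IsAlloc k a) (hk : ∀ i, 1 ≤ k i) {i j : I} (hij : i ≠ j) :
    ∃ x, a x = i ∧ v i x - v j x = Lw v a i j := by
  have hne := fib_nonempty a ha hk i
  obtain ⟨x, hx, heq⟩ := Finset.exists_mem_eq_inf' hne (fun x => v i x - v j x)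
  refine ⟨x, mem_fib.1 hx, ?_⟩
  unfold Lw
  rw [dif_pos hne, if_neg hij]
  exact heq.symm

/-- arc `(i,j)` lies on a simple zero cycle -/
def A0 (i j : I) : Prop :=
  ∃ (g : ℕ → I) (m t₀ : ℕ), 1 ≤ m ∧ g m = g 0 ∧ (∀ s < m, ∀ t < m, g s = g t → s = t) ∧
    cwSum (Lw v a) g m = 0 ∧ t₀ < m ∧ g t₀ = i ∧ g (t₀ + 1) = j

variable {v a}

/-- consecutive vertices of a simple closed walk of length ≥ 2 are distinct -/
lemma consec_ne {g : ℕ → I} {m : ℕ} (hm : 2 ≤ m) (hcl : g m = g 0)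
    (hinj : ∀ s < m, ∀ t < m, g s = g t → s = t) :
    ∀ t < m, g t ≠ g (t + 1) := by
  intro t ht h
  rcases Nat.lt_or_ge (t+1) m with h1 | h1
  · have := hinj t ht (t+1) h1 h
    omega
  · have ht1 : t + 1 = m := by omega
    rw [ht1, hcl] at h
    have := hinj t ht 0 (by omega) h
    omega

/-- rotating an itemized cycle: its `Phi` equals minus the walk weight of the induced
player walk, where item `y t` realizes arc `t`. -/
lemma phi_formPerm_eq {g : ℕ → I} {m : ℕ} (hcl : g m = g 0) (y : ℕ → X)
    (hyo : ∀ t < m, a (y t) = g t)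
    (hyinj : ∀ s < m, ∀ t < m, y s = y t → s = t) :
    Phi v a (((List.range m).map y).formPerm)
      = - ∑ t ∈ Finset.range m, (v (g t) (y t) - v (g (t+1)) (y t)) := by
  have h1 : ∀ x : X, (fun x z => v (a z) x - v (a x) x) x x = 0 := fun x => by ring
  have h3 : Phi v a (((List.range m).map y).formPerm)
      = ∑ t ∈ Finset.range m, (v (a (y ((t+1) % m))) (y t) - v (a (y t)) (y t)) :=
    sum_cycle y m hyinj (fun x z => v (a z) x - v (a x) x) h1
  rw [h3, ← Finset.sum_neg_distrib]
  refine Finset.sum_congr rfl (fun t ht => ?_)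
  have htm := Finset.mem_range.1 ht
  have hyt1 : a (y ((t + 1) % m)) = g (t + 1) := by
    rcases Nat.lt_or_ge (t+1) m with h' | h'
    · rw [Nat.mod_eq_of_lt h', hyo _ h']
    · have : t + 1 = m := by omega
      rw [this, Nat.mod_self, hyo 0 (by omega), ← hcl]
  rw [hyt1, hyo t htm]
  ring

lemma scnn_L (ha : OptA v k a) (hk : ∀ i, 1 ≤ k i) : SCnn (Lw v a) := by
  intro g m hcl hinj
  rcases Nat.lt_or_ge m 2 with hm | hm
  · interval_cases m
    · simp [cwSum]
    · simp [cwSum, hcl, Lw_diag]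
  · -- choose realizing items
    have harc : ∀ t < m, g t ≠ g (t + 1) := consec_ne hm hcl hinj
    have hspec : ∀ t, ∃ x : X, t < m → (a x = g t ∧ v (g t) x - v (g (t+1)) x = Lw v a (g t) (g (t+1))) := by
      intro t
      rcases Nat.lt_or_ge t m with ht | ht
      · obtain ⟨x, hx1, hx2⟩ := Lw_exists v a ha.1 hk (harc t ht)
        exact ⟨x, fun _ => ⟨hx1, hx2⟩⟩
      · exact ⟨(fib_nonempty a ha.1 hk (g 0)).choose, fun h => absurd h (by omega)⟩
    choose y hy using hspec
    have hyo : ∀ t < m, a (y t) = g t := fun t ht => (hy t ht).1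
    have hyinj : ∀ s < m, ∀ t < m, y s = y t → s = t := by
      intro s hs t ht h
      apply hinj s hs t ht
      rw [← hyo s hs, ← hyo t ht, h]
    have hphi := phi_nonpos ha (((List.range m).map y).formPerm)
    rw [phi_formPerm_eq hcl y hyo hyinj] at hphi
    have : cwSum (Lw v a) g m = ∑ t ∈ Finset.range m, (v (g t) (y t) - v (g (t+1)) (y t)) := by
      rw [cwSum]
      refine Finset.sum_congr rfl (fun t ht => ?_)
      exact ((hy t (Finset.mem_range.1 ht)).2).symm
    rw [this]
    linarith

/-- characterization of legality via zero cycles, for `a x ≠ i` -/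
lemma legal_char (ha : OptA v k a) (hk : ∀ i, 1 ≤ k i) (hv : ∀ i x, 0 < v i x)
    {x : X} {i : I} (hne : a x ≠ i) :
    LegalItem v k i x ↔ A0 v a (a x) i ∧ v (a x) x - v i x = Lw v a (a x) i := by
  constructor
  · intro hleg
    obtain ⟨b, hb, hbx⟩ := (legal_iff hv).1 hleg
    obtain ⟨π, hπ⟩ := exists_glue ha.1 hb.1
    have hvaleq : val v b = val v a := le_antisymm (ha.2 b hb.1) (hb.2 a ha.1)
    have hΦ : Phi v a π = 0 := by
      have : Phi v a π = val v b - val v a := by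
        rw [Phi, val, val, Finset.sum_sub_distrib]
        congr 1
        exact Finset.sum_congr rfl (fun z _ => by rw [hπ z])
      rw [this, hvaleq, sub_self]
    have hπx : a (π x) = i := by rw [hπ x, hbx]
    set m := Function.minimalPeriod ⇑π x with hmdef
    have hper : x ∈ Function.periodicPts ⇑π := by
      refine ⟨orderOf π, orderOf_pos π, ?_⟩
      show (⇑π)^[orderOf π] x = x
      rw [Equiv.Perm.iterate_eq_pow, pow_orderOf_eq_one]; rfl
    have hm : 0 < m := Function.minimalPeriod_pos_of_mem_periodicPts hper
    have hmx : (⇑π)^[m] x = x := Function.iterate_minimalPeriod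
    have hS := orbit_sum_zero (phi_nonpos ha) π hΦ x
    set f : ℕ → I := fun t => a ((⇑π)^[t] x) with hf
    have hfcl : f m = f 0 := by
      show a ((⇑π)^[m] x) = a ((⇑π)^[0] x)
      rw [hmx, Function.iterate_zero_apply]
    have hterm : ∀ t, Lw v a (f t) (f (t+1)) ≤ v (f t) ((⇑π)^[t] x) - v (f (t+1)) ((⇑π)^[t] x) := by
      intro t
      by_cases h : f t = f (t+1)
      · rw [← h, Lw_diag, sub_self]
      · exact Lw_le v a h rfl
    have hle : cwSum (Lw v a) f m
        ≤ ∑ t ∈ Finset.range m, (v (f t) ((⇑π)^[t] x) - v (f (t+1)) ((⇑π)^[t] x)) :=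
      Finset.sum_le_sum (fun t _ => hterm t)
    have hSsum : ∑ t ∈ Finset.range m,
        (v (f t) ((⇑π)^[t] x) - v (f (t+1)) ((⇑π)^[t] x)) = 0 := by
      rw [← neg_eq_zero, ← Finset.sum_neg_distrib, ← hS]
      refine Finset.sum_congr rfl (fun t ht => ?_)
      simp only [hf]
      rw [show (⇑π)^[t+1] x = π ((⇑π)^[t] x) from Function.iterate_succ_apply' _ _ _]
      ring
    have hcw0 : cwSum (Lw v a) f m ≤ 0 := hSsum ▸ hle
    have hSC := scnn_L ha hk
    have hge := cw_nonneg hSC m f hfcl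
    have hcw : cwSum (Lw v a) f m = 0 := le_antisymm hcw0 hge
    have hdiff : ∑ t ∈ Finset.range m,
        ((v (f t) ((⇑π)^[t] x) - v (f (t+1)) ((⇑π)^[t] x)) - Lw v a (f t) (f (t+1))) = 0 := by
      rw [Finset.sum_sub_distrib, hSsum, ← cwSum, hcw, sub_zero]
    have h0 : (v (f 0) ((⇑π)^[0] x) - v (f 1) ((⇑π)^[0] x)) - Lw v a (f 0) (f 1) = 0 :=
      (Finset.sum_eq_zero_iff_of_nonneg
        (fun t _ => by linarith [hterm t])).1 hdiff 0 (Finset.mem_range.2 hm)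
    have hf0 : f 0 = a x := rfl
    have hf1 : f 1 = i := by
      simp only [hf, Function.iterate_one]
      exact hπx
    have htight : v (a x) x - v i x = Lw v a (a x) i := by
      rw [← hf0, ← hf1]
      have hx0 : (⇑π)^[0] x = x := rfl
      rw [hx0] at h0
      linarith [h0]
    obtain ⟨g', m', h1, h2, h3, h4, h5, h6⟩ :=
      exists_simple_zero hSC m f hfcl (by omega) hcw0
    refine ⟨⟨g', m', 0, h1, h2, h3, h4, by omega, ?_, ?_⟩, htight⟩
    · rw [h5, hf0]
    · rw [h6, hf1]
  · rintro ⟨⟨g, m, t₀, hm1, hcl, hinj, hzero, ht₀, hgt₀, hgt₀1⟩, htight⟩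
    have hm2 : 2 ≤ m := by
      by_contra h
      have hm1' : m = 1 := by omega
      have ht0 : t₀ = 0 := by omega
      rw [ht0] at hgt₀ hgt₀1
      rw [show (0:ℕ)+1 = m by omega, hcl, hgt₀] at hgt₀1
      exact hne hgt₀1
    have harc := consec_ne hm2 hcl hinj
    have hspec : ∀ t, ∃ z : X, (t < m ∧ t ≠ t₀) →
        (a z = g t ∧ v (g t) z - v (g (t+1)) z = Lw v a (g t) (g (t+1))) := by
      intro t
      by_cases ht : t < m ∧ t ≠ t₀
      · obtain ⟨z, hz1, hz2⟩ := Lw_exists v a ha.1 hk (harc t ht.1)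
        exact ⟨z, fun _ => ⟨hz1, hz2⟩⟩
      · exact ⟨x, fun h => absurd h ht⟩
    choose y' hy' using hspec
    set y : ℕ → X := fun t => if t = t₀ then x else y' t with hy
    have hyo : ∀ t < m, a (y t) = g t := by
      intro t ht
      simp only [hy]
      rcases eq_or_ne t t₀ with rfl | hne'
      · rw [if_pos rfl, hgt₀]
      · rw [if_neg hne']
        exact (hy' t ⟨ht, hne'⟩).1
    have hyinj : ∀ s < m, ∀ t < m, y s = y t → s = t := by
      intro s hs t ht h
      apply hinj s hs t ht
      rw [← hyo s hs, ← hyo t ht, h]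
    have htval : ∀ t < m, v (g t) (y t) - v (g (t+1)) (y t) = Lw v a (g t) (g (t+1)) := by
      intro t ht
      simp only [hy]
      rcases eq_or_ne t t₀ with rfl | hne'
      · rw [if_pos rfl]
        rw [hgt₀, hgt₀1]
        exact htight
      · rw [if_neg hne']
        exact (hy' t ⟨ht, hne'⟩).2
    set π := ((List.range m).map y).formPerm with hπ
    have hΦ : Phi v a π = 0 := by
      rw [hπ, phi_formPerm_eq hcl y hyo hyinj]
      rw [show ∑ t ∈ Finset.range m, (v (g t) (y t) - v (g (t+1)) (y t))
          = cwSum (Lw v a) g m from Finset.sum_congr rfl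
            (fun t ht => htval t (Finset.mem_range.1 ht)), hzero, neg_zero]
    have hb := optA_comp ha π hΦ
    have hπx : a (π x) = i := by
      have hx : y t₀ = x := by simp [hy]
      have := cycle_apply y m hyinj t₀ ht₀
      rw [hx] at this
      rw [hπ, this]
      rcases Nat.lt_or_ge (t₀+1) m with h' | h'
      · rw [Nat.mod_eq_of_lt h', hyo _ h', hgt₀1]
      · have hteq : t₀ + 1 = m := by omega
        rw [hteq, Nat.mod_self, hyo 0 (by omega), ← hcl, ← hteq, hgt₀1]
    exact (legal_iff hv).2 ⟨_, hb, hπx⟩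

variable (v : I → X → ℝ) (a : X → I)
noncomputable def Limage : Finset ℝ :=
  ((Finset.univ ×ˢ Finset.univ).image (fun p : I × I => Lw v a p.1 p.2)) ∪ {0}

lemma zero_mem_Limage : (0:ℝ) ∈ Limage v a := by simp [Limage]

lemma Lw_mem_Limage (i j : I) : Lw v a i j ∈ Limage v a := by
  simp only [Limage, Finset.mem_union, Finset.mem_image]
  exact Or.inl ⟨(i, j), by simp⟩

noncomputable def Vn (v : I → X → ℝ) (a : X → I) : ℕ → Finset ℝ
  | 0 => {0}
  | n+1 => Finset.image₂ (· + ·) (Vn v a n) (Limage v a)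

lemma zero_mem_Vn : ∀ n, (0:ℝ) ∈ Vn v a n
  | 0 => by simp [Vn]
  | n+1 => by
    rw [Vn, show (0:ℝ) = 0 + 0 by ring]
    exact Finset.mem_image₂_of_mem (zero_mem_Vn n) (zero_mem_Limage v a)

lemma cwSum_mem_Vn : ∀ n (m : ℕ), m ≤ n → ∀ g : ℕ → I, cwSum (Lw v a) g m ∈ Vn v a n := by
  intro n
  induction n with
  | zero =>
    intro m hm g
    interval_cases m
    simp [cwSum, Vn]
  | succ n IH =>
    intro m hm g
    cases m with
    | zero =>
      have h : cwSum (Lw v a) g 0 = 0 := by simp [cwSum]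
      rw [h]
      exact zero_mem_Vn v a (n+1)
    | succ m' =>
      have h : cwSum (Lw v a) g (m'+1) = cwSum (Lw v a) g m' + Lw v a (g m') (g (m'+1)) :=
        Finset.sum_range_succ _ _
      rw [h, Vn]
      exact Finset.mem_image₂_of_mem (IH m' (by omega) g) (Lw_mem_Limage v a _ _)

noncomputable def delta : ℝ :=
  if h : ((Vn v a (Fintype.card I)).filter (fun s => 0 < s)).Nonempty then
    ((Vn v a (Fintype.card I)).filter (fun s => 0 < s)).min' h else 1

lemma delta_pos : 0 < delta v a := by
  unfold delta
  split
  · rename_i h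
    have := Finset.min'_mem _ h
    exact (Finset.mem_filter.1 this).2
  · norm_num

lemma delta_le {s : ℝ} (hs : s ∈ Vn v a (Fintype.card I)) (hpos : 0 < s) : delta v a ≤ s := by
  unfold delta
  have hne : ((Vn v a (Fintype.card I)).filter (fun s => 0 < s)).Nonempty :=
    ⟨s, Finset.mem_filter.2 ⟨hs, hpos⟩⟩
  rw [dif_pos hne]
  exact Finset.min'_le _ _ (Finset.mem_filter.2 ⟨hs, hpos⟩)

/-- perturbed weights -/
noncomputable def wE (e : I × I) : I → I → ℝ := fun i j =>
  Lw v a i j - if (i, j) = e then delta v a else 0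

lemma wE_diag {e : I × I} (he : e.1 ≠ e.2) (i : I) : wE v a e i i = 0 := by
  unfold wE
  rw [if_neg (by rintro rfl; exact he rfl), Lw_diag, sub_zero]

variable {v a}

lemma scnn_wE {k : I → ℕ} (ha : OptA v k a) (hk : ∀ i, 1 ≤ k i) {e : I × I}
    (he2 : ¬ A0 v a e.1 e.2) : SCnn (wE v a e) := by
  intro g m hcl hinj
  classical
  have hLnn := scnn_L ha hk g m hcl hinj
  set T := (Finset.range m).filter (fun t => ((g t, g (t+1)) : I × I) = e) with hT
  have hsum : cwSum (wE v a e) g m = cwSum (Lw v a) g m - (T.card : ℝ) * delta v a := by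
    unfold cwSum wE
    rw [Finset.sum_sub_distrib]
    congr 1
    rw [← Finset.sum_filter, ← hT, Finset.sum_const, nsmul_eq_mul]
  rw [hsum]
  rcases Nat.eq_zero_or_pos T.card with hc | hc
  · rw [hc]; simpa using hLnn
  · obtain ⟨t₀, ht₀⟩ := Finset.card_pos.1 hc
    rw [hT, Finset.mem_filter, Finset.mem_range] at ht₀
    have hT1 : T.card = 1 := by
      refine le_antisymm (Finset.card_le_one.2 (fun s hs t ht => ?_)) hc
      rw [hT, Finset.mem_filter, Finset.mem_range] at hs ht
      apply hinj s hs.1 t ht.1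
      have h1 : g s = e.1 := congrArg Prod.fst hs.2
      have h2 : g t = e.1 := congrArg Prod.fst ht.2
      rw [h1, h2]
    have hLpos : 0 < cwSum (Lw v a) g m := by
      rcases lt_or_eq_of_le hLnn with h | h
      · exact h
      · exfalso
        apply he2
        exact ⟨g, m, t₀, by omega, hcl, hinj, h.symm, ht₀.1,
          congrArg Prod.fst ht₀.2, congrArg Prod.snd ht₀.2⟩
    have hmN : m ≤ Fintype.card I := by
      have hinj' : Set.InjOn g (Finset.range m) := by
        intro s hs t ht h
        exact hinj s (by simpa using hs) t (by simpa using ht) h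
      have := Finset.card_le_card_of_injOn g (fun t _ => Finset.mem_univ (g t)) hinj'
      simpa using this
    have := delta_le v a (cwSum_mem_Vn v a (Fintype.card I) m hmN g) hLpos
    rw [hT1]
    push_cast
    linarith

variable (v a)

open Classical in
noncomputable def Earcs : Finset (I × I) :=
  (Finset.univ ×ˢ Finset.univ).filter (fun p => p.1 ≠ p.2 ∧ ¬ A0 v a p.1 p.2)

noncomputable def dpot : I → ℝ := fun j =>
  (pot (Lw v a) j + ∑ e ∈ Earcs v a, pot (wE v a e) j) / ((Earcs v a).card + 1)

variable {v a}

lemma dpot_le {k : I → ℕ} (ha : OptA v k a) (hk : ∀ i, 1 ≤ k i) (i j : I) :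
    dpot v a j - dpot v a i ≤ Lw v a i j := by
  classical
  set E := Earcs v a with hE
  set M : ℝ := (E.card : ℝ) + 1 with hM
  have hMpos : 0 < M := by positivity
  have h1 : pot (Lw v a) j - pot (Lw v a) i ≤ Lw v a i j :=
    pot_potential _ (Lw_diag v a) (scnn_L ha hk) i j
  have h2 : ∀ e ∈ E, pot (wE v a e) j - pot (wE v a e) i
      ≤ Lw v a i j - (if ((i,j) : I × I) = e then delta v a else 0) := by
    intro e he
    rw [hE, Earcs, Finset.mem_filter] at he
    exact pot_potential _ (wE_diag v a he.2.1) (scnn_wE ha hk he.2.2) i j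
  have h3 : ∑ e ∈ E, (pot (wE v a e) j - pot (wE v a e) i)
      ≤ (E.card : ℝ) * Lw v a i j - (if ((i,j) : I × I) ∈ E then delta v a else 0) := by
    calc ∑ e ∈ E, (pot (wE v a e) j - pot (wE v a e) i)
        ≤ ∑ e ∈ E, (Lw v a i j - (if ((i,j) : I × I) = e then delta v a else 0)) :=
          Finset.sum_le_sum h2
      _ = (E.card : ℝ) * Lw v a i j - (if ((i,j) : I × I) ∈ E then delta v a else 0) := by
          rw [Finset.sum_sub_distrib, Finset.sum_const, nsmul_eq_mul, Finset.sum_ite_eq]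
  have hsum : dpot v a j - dpot v a i
      = ((pot (Lw v a) j - pot (Lw v a) i)
        + ∑ e ∈ E, (pot (wE v a e) j - pot (wE v a e) i)) / M := by
    unfold dpot
    rw [← hE, ← hM, Finset.sum_sub_distrib]
    ring
  rw [hsum, div_le_iff₀ hMpos]
  have hite : (0:ℝ) ≤ (if ((i,j) : I × I) ∈ E then delta v a else 0) := by
    split
    · exact (delta_pos v a).le
    · exact le_refl 0
  have hLM : Lw v a i j * M = (E.card : ℝ) * Lw v a i j + Lw v a i j := by
    rw [hM]; ring
  linarith

lemma dpot_lt {k : I → ℕ} (ha : OptA v k a) (hk : ∀ i, 1 ≤ k i) {i j : I}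
    (hij : i ≠ j) (hA : ¬ A0 v a i j) :
    dpot v a j - dpot v a i < Lw v a i j := by
  classical
  set E := Earcs v a with hE
  set M : ℝ := (E.card : ℝ) + 1 with hM
  have hMpos : 0 < M := by positivity
  have h1 : pot (Lw v a) j - pot (Lw v a) i ≤ Lw v a i j :=
    pot_potential _ (Lw_diag v a) (scnn_L ha hk) i j
  have h2 : ∀ e ∈ E, pot (wE v a e) j - pot (wE v a e) i
      ≤ Lw v a i j - (if ((i,j) : I × I) = e then delta v a else 0) := by
    intro e he
    rw [hE, Earcs, Finset.mem_filter] at he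
    exact pot_potential _ (wE_diag v a he.2.1) (scnn_wE ha hk he.2.2) i j
  have h3 : ∑ e ∈ E, (pot (wE v a e) j - pot (wE v a e) i)
      ≤ (E.card : ℝ) * Lw v a i j - (if ((i,j) : I × I) ∈ E then delta v a else 0) := by
    calc ∑ e ∈ E, (pot (wE v a e) j - pot (wE v a e) i)
        ≤ ∑ e ∈ E, (Lw v a i j - (if ((i,j) : I × I) = e then delta v a else 0)) :=
          Finset.sum_le_sum h2
      _ = (E.card : ℝ) * Lw v a i j - (if ((i,j) : I × I) ∈ E then delta v a else 0) := by
          rw [Finset.sum_sub_distrib, Finset.sum_const, nsmul_eq_mul, Finset.sum_ite_eq]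
  have hmem : ((i,j) : I × I) ∈ E := by
    rw [hE, Earcs, Finset.mem_filter]
    exact ⟨by simp, hij, hA⟩
  rw [if_pos hmem] at h3
  have hsum : dpot v a j - dpot v a i
      = ((pot (Lw v a) j - pot (Lw v a) i)
        + ∑ e ∈ E, (pot (wE v a e) j - pot (wE v a e) i)) / M := by
    unfold dpot
    rw [← hE, ← hM, Finset.sum_sub_distrib]
    ring
  rw [hsum, div_lt_iff₀ hMpos]
  have hLM : Lw v a i j * M = (E.card : ℝ) * Lw v a i j + Lw v a i j := by
    rw [hM]; ring
  have hδ := delta_pos v a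
  linarith

lemma tight_of_A0 {d : I → ℝ} (hd : ∀ i j, d j - d i ≤ Lw v a i j) {i j : I}
    (hA : A0 v a i j) : d j - d i = Lw v a i j := by
  obtain ⟨g, m, t₀, hm, hcl, hinj, hz, ht₀, hg1, hg2⟩ := hA
  have htel : ∑ t ∈ Finset.range m, (d (g (t+1)) - d (g t)) = 0 := by
    rw [Finset.sum_range_sub (fun t => d (g t)), hcl, sub_self]
  have hzero : ∑ t ∈ Finset.range m,
      (Lw v a (g t) (g (t+1)) - (d (g (t+1)) - d (g t))) = 0 := by
    rw [Finset.sum_sub_distrib, htel, sub_zero]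
    exact hz
  have hterm := (Finset.sum_eq_zero_iff_of_nonneg
    (fun t _ => by linarith [hd (g t) (g (t+1))])).1 hzero t₀ (Finset.mem_range.2 ht₀)
  rw [hg1, hg2] at hterm
  linarith

lemma legal_self {k : I → ℕ} (ha : OptA v k a) (hv : ∀ i x, 0 < v i x) (x : X) :
    LegalItem v k (a x) x :=
  (legal_iff hv).2 ⟨a, ha, rfl⟩

/-- Main dual lemma -/
theorem main_dual {k : I → ℕ} (ha : OptA v k a) (hk : ∀ i, 1 ≤ k i)
    (hv : ∀ i x, 0 < v i x) :
    ∃ (p : X → ℝ) (c : I → ℝ), (∀ i x, v i x - p x ≤ c i) ∧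
      (∀ i x, (v i x - p x = c i ↔ LegalItem v k i x)) := by
  refine ⟨fun x => v (a x) x + dpot v a (a x), fun i => - dpot v a i, ?_, ?_⟩
  · intro i x
    dsimp only
    rcases eq_or_ne (a x) i with rfl | hne
    · ring_nf
      exact le_refl _
    · have hL : Lw v a (a x) i ≤ v (a x) x - v i x := Lw_le v a hne rfl
      have hd := dpot_le ha hk (a x) i
      linarith
  · intro i x
    dsimp only
    rcases eq_or_ne (a x) i with rfl | hne
    · constructor
      · intro _; exact legal_self ha hv x
      · intro _; ring
    · have hL : Lw v a (a x) i ≤ v (a x) x - v i x := Lw_le v a hne rfl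
      have hd := dpot_le ha hk (a x) i
      rw [legal_char ha hk hv hne]
      constructor
      · intro heq
        have heq' : dpot v a i - dpot v a (a x) = v (a x) x - v i x := by linarith
        by_cases hA : A0 v a (a x) i
        · have := tight_of_A0 (fun i j => dpot_le ha hk i j) hA
          constructor
          · exact hA
          · linarith
        · exfalso
          have := dpot_lt ha hk hne hA
          linarith
      · rintro ⟨hA, htight⟩
        have := tight_of_A0 (fun i j => dpot_le ha hk i j) hA
        linarith

variable {v : I → X → ℝ} {k : I → ℕ}

lemma legal_always_eq {i j : I} {x : X} (h1 : LegalItem v k i x) (h2 : AlwaysItem v k j x) :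
    i = j := by
  obtain ⟨O, hO, hx⟩ := h1
  have hxj := h2 O hO
  obtain ⟨i', -, huniq⟩ := hO.1.2 x
  rw [huniq i hx, huniq j hxj]

lemma always_imp_legal (hv : ∀ i x, 0 < v i x)
    (hex : ∃ O : I → Finset X, IsAllocation k O) {i : I} {x : X}
    (h : AlwaysItem v k i x) : LegalItem v k i x := by
  obtain ⟨a, ha⟩ := exists_optA hv hex
  exact ⟨fib a, isOptimal_fib hv ha, h _ (isOptimal_fib hv ha)⟩

theorem exists_rough_prices_aux
    (k : I → ℕ) (hk : ∀ i, 1 ≤ k i) (hsum : ∑ i, k i = Fintype.card X)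
    (v : I → X → ℝ) (hv : ∀ i x, 0 < v i x)
    (hex : ∃ O : I → Finset X, IsAllocation k O) :
    ∃ p : X → ℝ, (∀ x, 0 < p x) ∧
      ∀ i,
        (∀ x y, AlwaysItem v k i x → ¬ AlwaysItem v k i y →
          v i y - p y < v i x - p x) ∧
        (∀ x y, LegalItem v k i x → ¬ AlwaysItem v k i x →
          LegalItem v k i y → ¬ AlwaysItem v k i y →
          v i x - p x = v i y - p y) ∧
        (∀ x y, LegalItem v k i x → ¬ LegalItem v k i y →
          v i y - p y < v i x - p x) := by
  classical
  rcases isEmpty_or_nonempty I with hI | hI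
  · exact ⟨fun _ => 1, fun _ => one_pos, fun i => isEmptyElim i⟩
  obtain ⟨a, ha⟩ := exists_optA hv hex
  obtain ⟨p₀, c, hle, hiff⟩ := main_dual ha hk hv
  set S : Finset X := Finset.univ.filter (fun x => ∃ i, AlwaysItem v k i x) with hS
  set bad : Finset (I × X) :=
    (Finset.univ ×ˢ Finset.univ).filter (fun q => ¬ LegalItem v k q.1 q.2) with hbad
  set γ : ℝ := if h : bad.Nonempty then
    bad.inf' h (fun q => c q.1 - (v q.1 q.2 - p₀ q.2)) else 1 with hγ
  have hγpos : 0 < γ := by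
    rw [hγ]
    split
    · rename_i h
      obtain ⟨q, hq, heq⟩ := Finset.exists_mem_eq_inf' h (fun q => c q.1 - (v q.1 q.2 - p₀ q.2))
      rw [heq]
      rw [hbad, Finset.mem_filter] at hq
      have h1 := hle q.1 q.2
      have h2 : v q.1 q.2 - p₀ q.2 ≠ c q.1 := fun hc => hq.2 ((hiff q.1 q.2).1 hc)
      have := lt_of_le_of_ne h1 h2
      linarith
    · norm_num
  have hγle : ∀ i x, ¬ LegalItem v k i x → γ ≤ c i - (v i x - p₀ x) := by
    intro i x hnl
    have hmem : ((i, x) : I × X) ∈ bad := by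
      rw [hbad, Finset.mem_filter]
      exact ⟨by simp, hnl⟩
    rw [hγ, dif_pos ⟨_, hmem⟩]
    exact Finset.inf'_le _ hmem
  set ε : ℝ := γ / 2 with hε
  have hεpos : 0 < ε := by rw [hε]; linarith
  set T : ℝ := 1 + ε + ∑ x, |p₀ x| with hT
  refine ⟨fun x => p₀ x + T - (if x ∈ S then ε else 0), ?_, ?_⟩
  · intro x
    dsimp only
    have h1 : |p₀ x| ≤ ∑ x, |p₀ x| :=
      Finset.single_le_sum (fun y _ => abs_nonneg (p₀ y)) (Finset.mem_univ x)
    have h2 := neg_abs_le (p₀ x)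
    have h3 : (if x ∈ S then ε else 0) ≤ ε := by split <;> linarith
    rw [hT]
    linarith
  · intro i
    have keyL : ∀ z, LegalItem v k i z → v i z - p₀ z = c i := fun z hz => (hiff i z).2 hz
    have keyS : ∀ z, LegalItem v k i z → ¬ AlwaysItem v k i z → z ∉ S := by
      intro z hz hnaz hzS
      rw [hS, Finset.mem_filter] at hzS
      obtain ⟨j, hj⟩ := hzS.2
      rw [legal_always_eq hz hj] at hnaz
      exact hnaz hj
    have keyU : ∀ z, v i z - (p₀ z + T - (if z ∈ S then ε else 0))
        = (v i z - p₀ z) - T + (if z ∈ S then ε else 0) := fun z => by ring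
    refine ⟨?_, ?_, ?_⟩
    · intro x y hax hnay
      have hlx : LegalItem v k i x := always_imp_legal hv hex hax
      have hxS : x ∈ S := by rw [hS, Finset.mem_filter]; exact ⟨Finset.mem_univ x, i, hax⟩
      rw [keyU x, keyU y, keyL x hlx, if_pos hxS]
      by_cases hly : LegalItem v k i y
      · have hyS : y ∉ S := keyS y hly hnay
        rw [keyL y hly, if_neg hyS]
        linarith
      · have h1 := hγle i y hly
        have h2 : (if y ∈ S then ε else 0) ≤ ε := by split <;> linarith
        linarith
    · intro x y hlx hnax hly hnay
      rw [keyU x, keyU y, keyL x hlx, keyL y hly,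
        if_neg (keyS x hlx hnax), if_neg (keyS y hly hnay)]
    · intro x y hlx hnly
      rw [keyU x, keyU y, keyL x hlx]
      have h1 := hγle i y hnly
      have h2 : (if y ∈ S then ε else 0) ≤ ε := by split <;> linarith
      have h3 : (0:ℝ) ≤ (if x ∈ S then ε else 0) := by split <;> linarith
      rw [hε] at *
      linarith


end RoughAux

set_option maxHeartbeats 1000000 in
/-- Every multi-demand market with strictly positive item valuations admits rough prices. -/

theorem exists_rough_prices
    {X I : Type*} [Fintype X] [DecidableEq X] [Fintype I] [DecidableEq I]
    (k : I → ℕ) (hk : ∀ i, 1 ≤ k i) (hsum : ∑ i, k i = Fintype.card X)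
    (v : I → X → ℝ) (hv : ∀ i x, 0 < v i x)
    (hex : ∃ O : I → Finset X, IsAllocation k O) :
    ∃ p : X → ℝ, (∀ x, 0 < p x) ∧
      ∀ i,
        (∀ x y, AlwaysItem v k i x → ¬ AlwaysItem v k i y →
          v i y - p y < v i x - p x) ∧
        (∀ x y, LegalItem v k i x → ¬ AlwaysItem v k i x →
          LegalItem v k i y → ¬ AlwaysItem v k i y →
          v i x - p x = v i y - p y) ∧
        (∀ x y, LegalItem v k i x → ¬ LegalItem v k i y →
          v i y - p y < v i x - p x) :=
  RoughAux.exists_rough_prices_aux k hk hsum v hv hex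
end
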